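/- arXiv:0706.0356 — 7 statements merged into one kernel-verified Lean document; each statement's English description precedes it below -/
import Mathlib

section
/- For 0 ≤ x ≤ π/2, ∫_0^x log(tan θ) dθ = -∑_{k=0}^∞ sin((4k+2)x)/(2k+1)^2. -/
open Real MeasureTheory Set intervalIntegral Filter Topology


lemma log_integrable_Ioc {b : ℝ} (hb : 0 < b) (hb1 : b ≤ 2) :
    IntegrableOn Real.log (Set.Ioc 0 b) := by
  have h1 : IntegrableOn Real.log (Set.Ioc 0 2) := by
    have h2 : IntegrableOn (fun x : ℝ => -Real.log x + Real.log 2) (Set.Ioc 0 2) := by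
      apply intervalIntegral.integrableOn_deriv_of_nonneg
        (g := fun x => x * Real.log 2 + (x - x * Real.log x))
      · exact ((continuous_id.mul continuous_const).add
          (continuous_id.sub Real.continuous_mul_log)).continuousOn
      · intro x hx
        have := ((hasDerivAt_id x).const_mul (Real.log 2)).add
          ((hasDerivAt_id x).sub (Real.hasDerivAt_mul_log hx.1.ne'))
        convert this using 1
        · rfl
        · rfl
        · funext y; simp only [Pi.add_apply, Pi.sub_apply, id_eq]; ring
        simp [mul_comm]
        ring
      · intro x hx
        have : Real.log x ≤ Real.log 2 := Real.log_le_log hx.1 hx.2.le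
        linarith
    have := (h2.sub ((integrableOn_const_iff (C := Real.log 2)).2 (Or.inr (by simp)))).neg
    exact IntegrableOn.congr_fun this (fun x _ => by simp only [Pi.neg_apply, Pi.sub_apply]; ring) measurableSet_Ioc
  exact h1.mono (Ioc_subset_Ioc le_rfl hb1) le_rfl


lemma logsin_integrable : IntegrableOn (fun θ => Real.log (Real.sin θ)) (Set.Ioc 0 (π/2)) := by
  have hpi : (0:ℝ) < π / 2 := by positivity
  have hbound : IntegrableOn (fun θ => Real.log (π/2) - Real.log θ) (Set.Ioc 0 (π/2)) := by
    exact ((integrableOn_const_iff (C := Real.log (π/2))).2 (Or.inr (by simp))).sub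
      (log_integrable_Ioc hpi (by linarith [pi_le_four]))
  apply Integrable.mono' hbound
  · exact (Real.measurable_log.comp Real.continuous_sin.measurable).aestronglyMeasurable
  · filter_upwards [ae_restrict_mem measurableSet_Ioc] with θ hθ
    have h1 : 2 / π * θ ≤ Real.sin θ := Real.mul_le_sin hθ.1.le hθ.2
    have hπ : (0:ℝ) < π := pi_pos
    have h2 : 0 < 2 / π * θ := mul_pos (by positivity) hθ.1
    have h3 : Real.sin θ ≤ 1 := Real.sin_le_one θ
    have h4 : Real.log (Real.sin θ) ≤ 0 := Real.log_nonpos (by linarith) h3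
    rw [Real.norm_eq_abs, abs_of_nonpos h4]
    have h5 : Real.log (2 / π * θ) ≤ Real.log (Real.sin θ) :=
      Real.log_le_log h2 h1
    have h6 : Real.log (2 / π * θ) = -Real.log (π/2) + Real.log θ := by
      rw [Real.log_mul (by positivity) hθ.1.ne', ← Real.log_inv]
      norm_num
    linarith

lemma logcos_integrable : IntegrableOn (fun θ => Real.log (Real.cos θ)) (Set.Ioc 0 (π/2)) := by
  have h1 : IntervalIntegrable (fun θ => Real.log (Real.sin θ)) volume 0 (π/2) := by
    rw [intervalIntegrable_iff_integrableOn_Ioc_of_le (by positivity)]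
    exact logsin_integrable
  have h2 := (h1.comp_sub_left (π/2)).symm
  simp only [sub_zero, sub_self, Real.sin_pi_div_two_sub] at h2
  rw [intervalIntegrable_iff_integrableOn_Ioc_of_le (by positivity : (0:ℝ) ≤ π/2)] at h2
  exact h2


lemma logtan_integrable : IntegrableOn (fun θ => Real.log (Real.tan θ)) (Set.Ioc 0 (π/2)) := by
  apply IntegrableOn.congr_fun (logsin_integrable.sub logcos_integrable) _ measurableSet_Ioc
  intro θ hθ
  simp only [Pi.sub_apply]
  rcases eq_or_lt_of_le hθ.2 with h | h
  · rw [h]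
    simp [Real.tan_eq_sin_div_cos, Real.cos_pi_div_two]
  · rw [Real.tan_eq_sin_div_cos, Real.log_div
      (Real.sin_pos_of_pos_of_lt_pi hθ.1 (by linarith [pi_pos])).ne'
      (Real.cos_pos_of_mem_Ioo ⟨by linarith [pi_pos, hθ.1], h⟩).ne']

lemma logtan_intervalIntegrable {x : ℝ} (h0 : 0 ≤ x) (h1 : x ≤ π/2) :
    IntervalIntegrable (fun θ => Real.log (Real.tan θ)) volume 0 x := by
  rw [intervalIntegrable_iff_integrableOn_Ioc_of_le h0]
  exact logtan_integrable.mono (Ioc_subset_Ioc le_rfl h1) le_rfl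


noncomputable def ff (θ t : ℝ) : ℝ :=
  2 * Real.cos (2*θ) * (1 - t^2) / (1 - 2*t^2*Real.cos (4*θ) + t^4)

lemma cos4_lt_one {θ : ℝ} (hθ : θ ∈ Ioo 0 (π/2)) : Real.cos (4*θ) < 1 := by
  rcases lt_or_eq_of_le (Real.cos_le_one (4*θ)) with h | h
  · exact h
  · exfalso
    have := (Real.cos_eq_one_iff_of_lt_of_lt
      (by nlinarith [hθ.1, pi_pos] : -(2*π) < 4*θ)
      (by nlinarith [hθ.2, pi_pos] : 4*θ < 2*π)).1 h
    nlinarith [hθ.1]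

lemma denom_pos {θ t : ℝ} (hθ : θ ∈ Ioo 0 (π/2)) (ht0 : 0 ≤ t) (ht1 : t ≤ 1) :
    0 < 1 - 2*t^2*Real.cos (4*θ) + t^4 := by
  have h1 := cos4_lt_one hθ
  rcases eq_or_lt_of_le ht0 with h | h
  · nlinarith [sq_nonneg (1 - t^2)]
  · have h2 : 0 < t^2 := by positivity
    nlinarith [sq_nonneg (1 - t^2), mul_pos h2 (sub_pos.2 h1)]

lemma ff_integral {θ : ℝ} (hθ : θ ∈ Ioo 0 (π/2)) :
    ∫ t in (0:ℝ)..1, ff θ t = -Real.log (Real.tan θ) := by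
  set c := Real.cos (2*θ) with hc
  have hs : Real.sin (2*θ) > 0 := Real.sin_pos_of_pos_of_lt_pi (by linarith [hθ.1]) (by linarith [hθ.2])
  have hsq : Real.sin (2*θ)^2 + c^2 = 1 := Real.sin_sq_add_cos_sq (2*θ)
  have hc2 : c^2 < 1 := by nlinarith
  have hA : ∀ t : ℝ, 0 < 1 + 2*c*t + t^2 := fun t => by nlinarith [sq_nonneg (t + c)]
  have hB : ∀ t : ℝ, 0 < 1 - 2*c*t + t^2 := fun t => by nlinarith [sq_nonneg (t - c)]
  have hcos4 : Real.cos (4*θ) = 2*c^2 - 1 := by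
    rw [hc, ← Real.cos_two_mul]; ring_nf
  have key : ∀ t ∈ Icc (0:ℝ) 1, HasDerivAt
      (fun t => (Real.log (1 + 2*c*t + t^2) - Real.log (1 - 2*c*t + t^2))/2) (ff θ t) t := by
    intro t _
    have d1 : HasDerivAt (fun y : ℝ => 1 + 2*c*y + y^2) (2*c*1 + ↑2*t^1) t :=
      (((hasDerivAt_id t).const_mul (2*c)).const_add 1).add (hasDerivAt_pow 2 t)
    have d2 : HasDerivAt (fun y : ℝ => 1 - 2*c*y + y^2) (-(2*c)*1 + ↑2*t^1) t := by
      have := (((hasDerivAt_id t).const_mul (-(2*c))).const_add 1).add (hasDerivAt_pow 2 t)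
      convert this using 2
      · rfl
      · rfl
      · simp only [Pi.add_apply, id_eq]; ring
      · norm_num
    have l1 := (d1.log (hA t).ne')
    have l2 := (d2.log (hB t).ne')
    have h3 := (l1.sub l2).div_const 2
    convert h3 using 1
    · rfl
    · rfl
    · rfl
    rw [ff, hcos4,
      show 1 - 2*t^2*(2*c^2-1) + t^4 = (1 + 2*c*t + t^2) * (1 - 2*c*t + t^2) from by ring]
    rw [div_sub_div _ _ (hA t).ne' (hB t).ne']
    rw [div_div, div_eq_div_iff (mul_pos (hA t) (hB t)).ne' (mul_pos (mul_pos (hA t) (hB t)) two_pos).ne']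
    push_cast
    ring
  have hFTC := intervalIntegral.integral_eq_sub_of_hasDerivAt
    (fun t ht => key t (by rwa [uIcc_of_le (by norm_num : (0:ℝ) ≤ 1)] at ht))
    ?_
  · rw [hFTC]
    have hcosθ : Real.cos θ > 0 := Real.cos_pos_of_mem_Ioo ⟨by linarith [hθ.1, pi_pos], hθ.2⟩
    have hsinθ : Real.sin θ > 0 := Real.sin_pos_of_pos_of_lt_pi hθ.1 (by linarith [hθ.2, pi_pos])
    have e2 : 1 + 2*c*(1:ℝ) + 1^2 = (2*Real.cos θ)^2 := by
      rw [hc, Real.cos_two_mul]; ring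
    have e3 : 1 - 2*c*(1:ℝ) + 1^2 = (2*Real.sin θ)^2 := by
      rw [hc, Real.cos_two_mul']; linarith [Real.sin_sq_add_cos_sq θ]
    rw [e2, e3, Real.log_pow, Real.log_pow,
      Real.log_mul (by norm_num) hcosθ.ne', Real.log_mul (by norm_num) hsinθ.ne',
      Real.tan_eq_sin_div_cos, Real.log_div hsinθ.ne' hcosθ.ne']
    simp
    linarith [Real.sin_sq_add_cos_sq θ]
  · apply ContinuousOn.intervalIntegrable
    apply ContinuousOn.div
    · fun_prop
    · fun_prop
    · intro t ht
      rw [uIcc_of_le (by norm_num : (0:ℝ) ≤ 1)] at ht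
      exact (denom_pos hθ ht.1 ht.2).ne'


lemma ff_hasSum {θ t : ℝ} (ht0 : 0 ≤ t) (ht1 : t < 1) :
    HasSum (fun k : ℕ => 2 * t^(2*k) * Real.cos ((4*k+2)*θ)) (ff θ t) := by
  set z : ℂ := Complex.exp ((2*θ : ℝ) * Complex.I) with hz
  have hzp : ∀ m : ℕ, z ^ m = Complex.exp ((2*θ*m : ℝ) * Complex.I) := by
    intro m
    rw [hz, ← Complex.exp_nat_mul]
    congr 1
    push_cast
    ring
  have hnz : ‖(t:ℂ)^2 * z^2‖ < 1 := by
    rw [norm_mul, norm_pow, norm_pow, hz, Complex.norm_exp_ofReal_mul_I]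
    simp [Complex.norm_real, abs_of_nonneg ht0]
    nlinarith
  have hgeo := (hasSum_geometric_of_norm_lt_one hnz).mul_left (2*z)
  have hre := Complex.hasSum_re hgeo
  have hterm : ∀ k : ℕ, (2*z*((t:ℂ)^2*z^2)^k).re = 2*t^(2*k)*Real.cos ((4*k+2)*θ) := by
    intro k
    have h2 : ((t:ℂ)^2*z^2)^k = (t:ℂ)^(2*k) * z^(2*k) := by
      rw [mul_pow, ← pow_mul, ← pow_mul]
    have h3 : (2:ℂ)*z*((t:ℂ)^(2*k) * z^(2*k)) = (((2*t^(2*k) : ℝ)):ℂ) * z^(2*k+1) := by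
      push_cast; ring
    rw [h2, h3, hzp (2*k+1)]
    rw [show (2*θ*(2*(k:ℕ)+1:ℕ) : ℝ) = ((4*k+2)*θ : ℝ) by push_cast; ring]
    rw [Complex.re_ofReal_mul, Complex.exp_ofReal_mul_I_re]
  have hval : (2*z*(1 - (t:ℂ)^2*z^2)⁻¹).re = ff θ t := by
    have hz2 : z^2 = Complex.exp ((4*θ:ℝ)*Complex.I) := by
      rw [hzp 2]
      congr 1
      push_cast
      ring
    have hre4 : (Complex.exp ((4*θ:ℝ) * Complex.I)).re = Real.cos (4*θ) :=
      Complex.exp_ofReal_mul_I_re _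
    have him4 : (Complex.exp ((4*θ:ℝ) * Complex.I)).im = Real.sin (4*θ) :=
      Complex.exp_ofReal_mul_I_im _
    push_cast at hre4 him4
    have hbre : ((1:ℂ) - (t:ℂ)^2*z^2).re = 1 - t^2 * Real.cos (4*θ) := by
      simp [hz2, Complex.sub_re, Complex.mul_re, ← Complex.ofReal_pow,
        hre4, him4]
    have hbim : ((1:ℂ) - (t:ℂ)^2*z^2).im = -(t^2 * Real.sin (4*θ)) := by
      simp [hz2, Complex.sub_im, Complex.mul_im, ← Complex.ofReal_pow,
        hre4, him4]
    have hzre : z.re = Real.cos (2*θ) := by rw [hz, Complex.exp_ofReal_mul_I_re]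
    have hzim : z.im = Real.sin (2*θ) := by rw [hz, Complex.exp_ofReal_mul_I_im]
    have hns : Complex.normSq (1 - (t:ℂ)^2*z^2) = 1 - 2*t^2*Real.cos (4*θ) + t^4 := by
      rw [Complex.normSq_apply, hbre, hbim]
      linear_combination (t^4 : ℝ) * Real.sin_sq_add_cos_sq (4*θ)
    rw [← div_eq_mul_inv, Complex.div_re, hns, hbre, hbim]
    have h2re : (2*z).re = 2*Real.cos (2*θ) := by simp [hzre]
    have h2im : (2*z).im = 2*Real.sin (2*θ) := by simp [hzim]
    rw [h2re, h2im, ff, ← add_div]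
    congr 1
    have hcs : Real.cos (4*θ) * Real.cos (2*θ) + Real.sin (4*θ) * Real.sin (2*θ)
        = Real.cos (2*θ) := by
      rw [← Real.cos_sub]
      norm_num
      ring_nf
    linear_combination (-2*t^2 : ℝ) * hcs
  exact hval ▸ (hre.congr_fun fun k => (hterm k).symm)


lemma integral_cos_mul {c y x : ℝ} (hc : c ≠ 0) :
    ∫ θ in y..x, Real.cos (c*θ) = (Real.sin (c*x) - Real.sin (c*y))/c := by
  have key : ∀ θ : ℝ, HasDerivAt (fun u => Real.sin (c*u)/c) (Real.cos (c*θ)) θ := by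
    intro θ
    have h1 : HasDerivAt (fun u : ℝ => c*u) c θ := by
      simpa using (hasDerivAt_id θ).const_mul c
    have := ((Real.hasDerivAt_sin (c*θ)).comp θ h1).div_const c
    convert this using 1
    · rfl
    · rfl
    · rfl
    field_simp
  rw [intervalIntegral.integral_eq_sub_of_hasDerivAt (fun θ _ => key θ)
    ((Real.continuous_cos.comp (continuous_const.mul continuous_id)).intervalIntegrable y x)]
  ring

lemma summable_aux : Summable (fun k : ℕ => (1:ℝ)/(2*k+1)^2) := by
  have h1 : Summable (fun k : ℕ => (1:ℝ)/(k+1)^2) := by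
    have := (summable_nat_add_iff 1).2 (Real.summable_one_div_nat_pow.2 one_lt_two)
    simpa using this
  apply h1.of_nonneg_of_le (fun k => by positivity)
  intro k
  apply div_le_div_of_nonneg_left (by norm_num) (by positivity)
  have : ((k:ℝ)+1) ≤ 2*k+1 := by nlinarith [Nat.cast_nonneg (α := ℝ) k]
  nlinarith [Nat.cast_nonneg (α := ℝ) k]

-- θ-integration of the series, for fixed t ∈ [0,1)
lemma theta_integral {t y x : ℝ} (ht0 : 0 ≤ t) (ht1 : t < 1) (hyx : y ≤ x)
    (hy : 0 < y) (hx : x < π/2) :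
    ∫ θ in Set.Ioc y x, ff θ t
      = ∑' k : ℕ, 2 * t^(2*k) * ((Real.sin ((4*k+2)*x) - Real.sin ((4*k+2)*y))/(4*k+2)) := by
  have hint : ∀ k : ℕ, Integrable (fun θ => 2 * t^(2*k) * Real.cos ((4*k+2)*θ))
      (volume.restrict (Set.Ioc y x)) := by
    intro k
    exact (continuous_const.mul (Real.continuous_cos.comp
      (continuous_const.mul continuous_id))).integrableOn_Ioc.integrable
  have hsum : Summable (fun k : ℕ =>
      ∫ θ in Set.Ioc y x, ‖2 * t^(2*k) * Real.cos ((4*k+2)*θ)‖) := by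
    have hg : Summable (fun k : ℕ => 2 * t^(2*k) * (x - y)) := by
      have h2 : Summable (fun k : ℕ => (t^2)^k) := summable_geometric_of_lt_one (by positivity)
        (by nlinarith)
      apply Summable.mul_right
      simpa [pow_mul] using (h2.mul_left 2)
    refine Summable.of_nonneg_of_le (fun k => integral_nonneg (fun θ => norm_nonneg _))
      (fun k => ?_) hg
    calc ∫ θ in Set.Ioc y x, ‖2 * t^(2*k) * Real.cos ((4*k+2)*θ)‖
          ≤ ∫ _θ in Set.Ioc y x, 2 * t^(2*k) := by
            apply setIntegral_mono_on (hint k).norm (integrableOn_const (by simp)) measurableSet_Ioc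
            intro θ _
            rw [norm_mul, norm_mul]
            simp only [Real.norm_eq_abs]
            rw [abs_of_nonneg (by norm_num : (0:ℝ) ≤ 2), abs_of_nonneg (pow_nonneg ht0 _)]
            nlinarith [abs_cos_le_one ((4*k+2)*θ), pow_nonneg ht0 (2*k), abs_nonneg (Real.cos ((4*k+2)*θ))]
        _ = 2 * t^(2*k) * (x - y) := by
            rw [setIntegral_const]
            simp [Real.volume_Ioc, ENNReal.toReal_ofReal (by linarith : (0:ℝ) ≤ x - y)]
            rw [max_eq_left (sub_nonneg.2 hyx)]
            ring
  have hswap := MeasureTheory.integral_tsum_of_summable_integral_norm hint hsum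
  have hcongr : ∀ θ ∈ Set.Ioc y x, (∑' k : ℕ, 2 * t^(2*k) * Real.cos ((4*k+2)*θ)) = ff θ t :=
    fun θ _ => (ff_hasSum ht0 ht1).tsum_eq
  rw [setIntegral_congr_fun measurableSet_Ioc hcongr] at hswap
  rw [← hswap]
  congr 1
  funext k
  have h1 : ((4*k+2) : ℝ) ≠ 0 := by positivity
  rw [← intervalIntegral.integral_of_le hyx, intervalIntegral.integral_const_mul]
  rw [show (fun θ => Real.cos ((4*(k:ℕ)+2)*θ)) = fun θ => Real.cos (((4*(k:ℕ)+2):ℝ)*θ) from rfl]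
  rw [integral_cos_mul h1]


lemma summable_sin (u : ℝ) :
    Summable (fun k : ℕ => Real.sin ((4*k+2)*u)/(2*k+1)^2) := by
  apply Summable.of_norm_bounded summable_aux
  intro k
  rw [norm_div, Real.norm_eq_abs, Real.norm_eq_abs,
    abs_of_nonneg (by positivity : (0:ℝ) ≤ (2*(k:ℝ)+1)^2)]
  gcongr
  exact Real.abs_sin_le_one _

-- the t-integral of the series
lemma t_integral {y x : ℝ} :
    ∫ t in Set.Ioc (0:ℝ) 1,
        (∑' k : ℕ, 2 * t^(2*k) * ((Real.sin ((4*k+2)*x) - Real.sin ((4*k+2)*y))/(4*k+2)))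
      = ∑' k : ℕ, (Real.sin ((4*k+2)*x) - Real.sin ((4*k+2)*y))/(2*k+1)^2 := by
  set Δ : ℕ → ℝ := fun k => Real.sin ((4*k+2)*x) - Real.sin ((4*k+2)*y) with hΔ
  have hΔ2 : ∀ k, |Δ k| ≤ 2 := by
    intro k
    rw [hΔ]
    have := Real.neg_one_le_sin ((4*k+2)*x)
    have := Real.sin_le_one ((4*k+2)*x)
    have := Real.neg_one_le_sin ((4*k+2)*y)
    have := Real.sin_le_one ((4*k+2)*y)
    rw [abs_le]; constructor <;> simp <;> linarith
  have hpow : ∀ (t : ℝ) (k : ℕ), (0:ℝ) ≤ t^(2*k) := by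
    intro t k
    rw [pow_mul]
    positivity
  have hint : ∀ k : ℕ, Integrable (fun t => 2 * t^(2*k) * (Δ k/(4*k+2)))
      (volume.restrict (Set.Ioc (0:ℝ) 1)) := by
    intro k
    exact ((continuous_const.mul (continuous_pow _)).mul continuous_const).integrableOn_Ioc.integrable
  have hval : ∀ k : ℕ, ∫ t in Set.Ioc (0:ℝ) 1, 2 * t^(2*k) * (Δ k/(4*k+2)) = Δ k/(2*k+1)^2 := by
    intro k
    rw [← intervalIntegral.integral_of_le (by norm_num : (0:ℝ) ≤ 1)]
    rw [show (fun t : ℝ => 2 * t^(2*k) * (Δ k/(4*k+2))) =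
      (fun t : ℝ => (2 * (Δ k/(4*k+2))) * t^(2*k)) from by funext t; ring]
    rw [intervalIntegral.integral_const_mul, integral_pow]
    have h1 : ((2*k+1:ℕ):ℝ) ≠ 0 := by positivity
    field_simp
    push_cast
    ring
  have hnorm : ∀ k : ℕ, ∫ t in Set.Ioc (0:ℝ) 1, ‖2 * t^(2*k) * (Δ k/(4*k+2))‖
      = |Δ k/(4*k+2)| * (2/(2*k+1)) := by
    intro k
    have : ∀ t ∈ Set.Ioc (0:ℝ) 1, ‖2 * t^(2*k) * (Δ k/(4*k+2))‖
        = (2*|Δ k/(4*k+2)|) * t^(2*k) := by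
      intro t _
      rw [Real.norm_eq_abs, abs_mul, abs_mul]
      rw [abs_of_nonneg (by norm_num : (0:ℝ) ≤ 2), abs_of_nonneg (hpow t k)]
      ring
    rw [setIntegral_congr_fun measurableSet_Ioc this,
      ← intervalIntegral.integral_of_le (by norm_num : (0:ℝ) ≤ 1),
      intervalIntegral.integral_const_mul, integral_pow]
    have h1 : ((2*k+1:ℕ):ℝ) ≠ 0 := by positivity
    push_cast
    field_simp
    ring
  have hsum : Summable (fun k : ℕ => ∫ t in Set.Ioc (0:ℝ) 1, ‖2 * t^(2*k) * (Δ k/(4*k+2))‖) := by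
    rw [show (fun k : ℕ => ∫ t in Set.Ioc (0:ℝ) 1, ‖2 * t^(2*k) * (Δ k/(4*k+2))‖)
      = fun k : ℕ => |Δ k/(4*k+2)| * (2/(2*k+1)) from funext hnorm]
    apply Summable.of_nonneg_of_le (fun k => by positivity) (fun k => ?_)
      (summable_aux.mul_left 4)
    have h2 : |Δ k/(4*k+2)| ≤ 2/(4*k+2) := by
      rw [abs_div, abs_of_nonneg (by positivity : (0:ℝ) ≤ 4*k+2)]
      apply div_le_div_of_nonneg_right (hΔ2 k) (by positivity) |>.trans_eq rfl
    calc |Δ k/(4*k+2)| * (2/(2*k+1)) ≤ (2/(4*k+2)) * (2/(2*k+1)) := by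
          apply mul_le_mul_of_nonneg_right h2 (by positivity)
      _ = 2 * (1/(2*(k:ℝ)+1)^2) := by
          have h1 : ((2:ℝ)*k+1) ≠ 0 := by positivity
          rw [show (4*(k:ℝ)+2) = 2*(2*k+1) by ring]
          field_simp
      _ ≤ 4 * (1/(2*k+1)^2) := by
          have h2 : (0:ℝ) ≤ 1/(2*(k:ℝ)+1)^2 := by positivity
          linarith
  have := MeasureTheory.integral_tsum_of_summable_integral_norm hint hsum
  rw [← this]
  congr 1
  funext k
  exact hval k


lemma core {y x : ℝ} (hy : 0 < y) (hyx : y ≤ x) (hx : x < π/2) :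
    ∫ θ in y..x, Real.log (Real.tan θ)
      = (∑' k : ℕ, Real.sin ((4*k+2)*y)/(2*k+1)^2)
        - ∑' k : ℕ, Real.sin ((4*k+2)*x)/(2*k+1)^2 := by
  have hsub : Set.Icc y x ⊆ Set.Ioo 0 (π/2) := fun θ hθ =>
    ⟨lt_of_lt_of_le hy hθ.1, lt_of_le_of_lt hθ.2 hx⟩
  -- Fubini
  have hcont : ContinuousOn (Function.uncurry ff) (Set.Icc y x ×ˢ Set.Icc (0:ℝ) 1) := by
    apply ContinuousOn.div
    · fun_prop
    · fun_prop
    · rintro ⟨θ, t⟩ ⟨hθ, ht⟩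
      exact (denom_pos (hsub hθ) ht.1 ht.2).ne'
  have hintOn : IntegrableOn (Function.uncurry ff) (Set.Ioc y x ×ˢ Set.Ioc (0:ℝ) 1)
      (volume.prod volume) := by
    apply (hcont.integrableOn_compact (isCompact_Icc.prod isCompact_Icc)).mono_set
    exact Set.prod_mono Set.Ioc_subset_Icc_self Set.Ioc_subset_Icc_self
  have hswap : ∫ θ in Set.Ioc y x, ∫ t in Set.Ioc (0:ℝ) 1, ff θ t
      = ∫ t in Set.Ioc (0:ℝ) 1, ∫ θ in Set.Ioc y x, ff θ t := by
    apply MeasureTheory.integral_integral_swap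
    rwa [Measure.prod_restrict]
  -- LHS to inner integral
  have h1 : ∫ θ in y..x, Real.log (Real.tan θ)
      = -∫ θ in Set.Ioc y x, ∫ t in Set.Ioc (0:ℝ) 1, ff θ t := by
    rw [intervalIntegral.integral_of_le hyx, ← MeasureTheory.integral_neg]
    apply setIntegral_congr_fun measurableSet_Ioc
    intro θ hθ
    have hθ' : θ ∈ Set.Ioo 0 (π/2) := hsub ⟨hθ.1.le, hθ.2⟩
    show Real.log (Real.tan θ) = -∫ t in Set.Ioc (0:ℝ) 1, ff θ t
    rw [← intervalIntegral.integral_of_le (by norm_num : (0:ℝ) ≤ 1), ff_integral hθ', neg_neg]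
  rw [h1, hswap]
  -- now replace inner θ-integral by series, a.e. in t
  have h2 : ∫ t in Set.Ioc (0:ℝ) 1, ∫ θ in Set.Ioc y x, ff θ t
      = ∫ t in Set.Ioc (0:ℝ) 1,
          (∑' k : ℕ, 2 * t^(2*k) * ((Real.sin ((4*k+2)*x) - Real.sin ((4*k+2)*y))/(4*k+2))) := by
    apply MeasureTheory.setIntegral_congr_ae measurableSet_Ioc
    have hne : ∀ᵐ (t:ℝ), t ≠ (1:ℝ) := by
      refine mem_ae_iff.2 ?_
      have : {t : ℝ | t ≠ 1}ᶜ = {1} := by ext t; simp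
      rw [this]
      exact measure_singleton 1
    filter_upwards [hne] with t ht1 ht
    exact theta_integral ht.1.le (lt_of_le_of_ne ht.2 ht1) hyx hy hx
  rw [h2, t_integral]
  rw [show (fun k : ℕ => (Real.sin ((4*k+2)*x) - Real.sin ((4*k+2)*y))/(2*k+1)^2)
    = fun k : ℕ => Real.sin ((4*(k:ℕ)+2)*x)/(2*(k:ℕ)+1)^2 - Real.sin ((4*(k:ℕ)+2)*y)/(2*(k:ℕ)+1)^2
    from funext fun k => sub_div _ _ _]
  rw [Summable.tsum_sub (summable_sin x) (summable_sin y)]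
  ring


noncomputable def S : ℝ → ℝ := fun u => ∑' k : ℕ, Real.sin ((4*k+2)*u)/(2*k+1)^2

lemma S_continuous : Continuous S := by
  apply continuous_tsum (u := fun k : ℕ => (1:ℝ)/(2*k+1)^2)
  · intro k
    fun_prop
  · exact summable_aux
  · intro k u
    rw [norm_div, Real.norm_eq_abs, Real.norm_eq_abs,
      abs_of_nonneg (by positivity : (0:ℝ) ≤ (2*(k:ℝ)+1)^2)]
    gcongr
    exact Real.abs_sin_le_one _

lemma S_zero : S 0 = 0 := by
  simp [S]

lemma stmt_mid {x : ℝ} (hx0 : 0 < x) (hx1 : x < π/2) :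
    (∫ θ in (0:ℝ)..x, Real.log (Real.tan θ)) = -S x := by
  have hpi : (0:ℝ) < π/2 := by positivity
  have hIcc : IntegrableOn (fun θ => Real.log (Real.tan θ)) (Set.Icc 0 x) := by
    rw [integrableOn_Icc_iff_integrableOn_Ioc]
    exact logtan_integrable.mono (Ioc_subset_Ioc le_rfl hx1.le) le_rfl
  have hL : ContinuousWithinAt (fun y => ∫ θ in y..x, Real.log (Real.tan θ)) (Set.Icc 0 x) 0 := by
    have hint' : IntegrableOn (fun θ => Real.log (Real.tan θ)) (uIcc 0 x) volume := by
      rwa [uIcc_of_le hx0.le]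
    have hcont := intervalIntegral.continuousOn_primitive_interval_left hint'
    rw [uIcc_of_le hx0.le] at hcont
    exact hcont 0 (left_mem_Icc.2 hx0.le)
  have hne : (𝓝[Set.Ioc 0 x] (0:ℝ)).NeBot := by
    rw [← mem_closure_iff_nhdsWithin_neBot, closure_Ioc hx0.ne]
    exact ⟨le_rfl, hx0.le⟩
  have htL : Tendsto (fun y => ∫ θ in y..x, Real.log (Real.tan θ)) (𝓝[Set.Ioc 0 x] 0)
      (𝓝 (∫ θ in (0:ℝ)..x, Real.log (Real.tan θ))) :=
    hL.tendsto.mono_left (nhdsWithin_mono _ Set.Ioc_subset_Icc_self)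
  have htR : Tendsto (fun y => S y - S x) (𝓝[Set.Ioc 0 x] 0) (𝓝 (-S x)) := by
    have := ((S_continuous.tendsto 0).sub tendsto_const_nhds (g := fun _ => S x))
    rw [S_zero, zero_sub] at this
    exact this.mono_left nhdsWithin_le_nhds
  have heq : ∀ y ∈ Set.Ioc 0 x, (∫ θ in y..x, Real.log (Real.tan θ)) = S y - S x := by
    intro y hy
    exact core hy.1 hy.2 hx1
  have := htL.congr' (f₂ := fun y => S y - S x) ?_
  · exact tendsto_nhds_unique this htR
  · filter_upwards [self_mem_nhdsWithin] with y hy using heq y hy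

theorem stmt1 (x : ℝ) (hx0 : 0 ≤ x) (hx1 : x ≤ π / 2) :
    (∫ θ in (0:ℝ)..x, Real.log (Real.tan θ)) =
      -∑' k : ℕ, Real.sin ((4 * k + 2) * x) / (2 * k + 1) ^ 2 := by
  have hpi : (0:ℝ) < π/2 := by positivity
  rcases eq_or_lt_of_le hx0 with h0 | h0
  · rw [← h0]
    simp
  rcases eq_or_lt_of_le hx1 with h1 | h1
  · -- x = π/2 : take limits x' → π/2⁻
    subst h1
    have hIcc : IntegrableOn (fun θ => Real.log (Real.tan θ)) (Set.Icc 0 (π/2)) := by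
      rw [integrableOn_Icc_iff_integrableOn_Ioc]
      exact logtan_integrable
    have hL : ContinuousWithinAt (fun u => ∫ θ in (0:ℝ)..u, Real.log (Real.tan θ))
        (Set.Icc 0 (π/2)) (π/2) := by
      have hint' : IntegrableOn (fun θ => Real.log (Real.tan θ)) (uIcc 0 (π/2)) volume := by
        rwa [uIcc_of_le hpi.le]
      have hcont := intervalIntegral.continuousOn_primitive_interval hint'
      rw [uIcc_of_le hpi.le] at hcont
      exact hcont (π/2) (right_mem_Icc.2 hpi.le)
    have hne : (𝓝[Set.Ioo 0 (π/2)] (π/2:ℝ)).NeBot := by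
      rw [← mem_closure_iff_nhdsWithin_neBot, closure_Ioo hpi.ne]
      exact ⟨hpi.le, le_rfl⟩
    have htL : Tendsto (fun u => ∫ θ in (0:ℝ)..u, Real.log (Real.tan θ))
        (𝓝[Set.Ioo 0 (π/2)] (π/2)) (𝓝 (∫ θ in (0:ℝ)..(π/2), Real.log (Real.tan θ))) :=
      hL.tendsto.mono_left (nhdsWithin_mono _ Set.Ioo_subset_Icc_self)
    have htR : Tendsto (fun u => -S u) (𝓝[Set.Ioo 0 (π/2)] (π/2)) (𝓝 (-S (π/2))) :=
      ((S_continuous.tendsto (π/2)).neg).mono_left nhdsWithin_le_nhds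
    have := htL.congr' (f₂ := fun u => -S u) ?_
    · exact tendsto_nhds_unique this htR
    · filter_upwards [self_mem_nhdsWithin] with u hu using stmt_mid hu.1 hu.2
  · exact stmt_mid h0 h1
end

section
/- For 0 ≤ x ≤ π/4, ∫_0^x log(tan θ) dθ = x·log(tan x) - (1/4)·∑_{k=0}^∞ (2 sin 2x)^{2k+1} / ((2k+1)^2 · C(2k,k)), where C(2k,k) is the central binomial coefficient. At x = 0 the term x·log(tan x) is interpreted as 0. -/
open Real Set Filter Topology

noncomputable def cb (k : ℕ) : ℝ := (Nat.choose (2 * k) k : ℝ)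
lemma cb_pos (k : ℕ) : 0 < cb k := by
  have : 0 < Nat.choose (2 * k) k := Nat.choose_pos (by omega)
  unfold cb; exact_mod_cast this

lemma cb_lower (k : ℕ) : (4 : ℝ) ^ k ≤ (2 * k + 1) * cb k := by
  have := Nat.four_pow_le_two_mul_add_one_mul_central_binom k
  have h : ((4 ^ k : ℕ) : ℝ) ≤ (((2 * k + 1) * (2 * k).choose k : ℕ) : ℝ) := by exact_mod_cast this
  push_cast at h
  simpa [cb] using h

lemma cb_succ (k : ℕ) : ((k : ℝ) + 1) * cb (k + 1) = 2 * (2 * k + 1) * cb k := by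
  have := Nat.succ_mul_centralBinom_succ k
  have h : (((k + 1) * Nat.centralBinom (k + 1) : ℕ) : ℝ)
      = ((2 * (2 * k + 1) * Nat.centralBinom k : ℕ) : ℝ) := by exact_mod_cast this
  unfold Nat.centralBinom at h
  push_cast at h
  unfold cb
  push_cast
  linarith

lemma cb_sqrt_lower (k : ℕ) (hk : 1 ≤ k) : (4 : ℝ) ^ k ≤ 2 * Real.sqrt k * cb k := by
  induction k with
  | zero => omega
  | succ n ih =>
    rcases Nat.eq_or_lt_of_le hk with h1 | h1
    · have : n = 0 := by omega
      subst this
      norm_num [cb, Real.sqrt_one]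
    · have hn : 1 ≤ n := by omega
      have ihn := ih hn
      have hnpos : (0 : ℝ) < n := by exact_mod_cast hn
      have e1 : (Real.sqrt n) ^ 2 = (n : ℝ) := Real.sq_sqrt hnpos.le
      have e2 : (Real.sqrt ((n : ℝ) + 1)) ^ 2 = (n : ℝ) + 1 := Real.sq_sqrt (by positivity)
      have key : 2 * Real.sqrt n * ((n : ℝ) + 1) ≤ Real.sqrt ((n : ℝ) + 1) * (2 * n + 1) := by
        have h1' : (0 : ℝ) ≤ 2 * Real.sqrt n * ((n : ℝ) + 1) := by positivity
        have expand1 : (2 * Real.sqrt n * ((n : ℝ) + 1)) ^ 2 = 4 * n * ((n:ℝ)+1)^2 := by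
          have h : (2 * Real.sqrt n * ((n : ℝ) + 1)) ^ 2 = 4 * (Real.sqrt n ^ 2) * ((n:ℝ)+1)^2 := by ring
          rw [h, e1]
        have expand2 : (Real.sqrt ((n : ℝ) + 1) * (2 * n + 1)) ^ 2 = ((n:ℝ)+1) * (2*(n:ℝ)+1)^2 := by
          have h : (Real.sqrt ((n : ℝ) + 1) * (2 * n + 1)) ^ 2 = (Real.sqrt ((n:ℝ)+1) ^ 2) * (2*(n:ℝ)+1)^2 := by ring
          rw [h, e2]
        have hsq : (2 * Real.sqrt n * ((n : ℝ) + 1)) ^ 2 ≤ (Real.sqrt ((n : ℝ) + 1) * (2 * n + 1)) ^ 2 := by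
          rw [expand1, expand2]; nlinarith [hnpos]
        calc 2 * Real.sqrt n * ((n : ℝ) + 1)
            = Real.sqrt ((2 * Real.sqrt n * ((n : ℝ) + 1)) ^ 2) := (Real.sqrt_sq h1').symm
          _ ≤ Real.sqrt ((Real.sqrt ((n : ℝ) + 1) * (2 * n + 1)) ^ 2) := Real.sqrt_le_sqrt hsq
          _ = Real.sqrt ((n : ℝ) + 1) * (2 * n + 1) := Real.sqrt_sq (by positivity)
      have hcb := cb_pos n
      have hc := cb_succ n
      have hmul : ((n : ℝ) + 1) * ((4:ℝ) ^ (n+1)) ≤ ((n : ℝ) + 1) * (2 * Real.sqrt ((n:ℝ)+1) * cb (n + 1)) := by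
        have t1 := mul_le_mul_of_nonneg_left key (by positivity : (0:ℝ) ≤ 4 * cb n)
        have t2 := mul_le_mul_of_nonneg_left ihn (by positivity : (0:ℝ) ≤ 4 * ((n:ℝ)+1))
        have hrw : ((n : ℝ) + 1) * (2 * Real.sqrt ((n:ℝ)+1) * cb (n + 1))
            = 4 * cb n * (Real.sqrt ((n : ℝ) + 1) * (2 * n + 1)) := by
          nlinarith [hc, Real.sqrt_nonneg ((n:ℝ)+1)]
        rw [hrw, pow_succ]
        nlinarith [t1, t2]
      have hfin := le_of_mul_le_mul_left hmul (show (0:ℝ) < (n:ℝ)+1 by positivity)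
      push_cast
      exact hfin

noncomputable def Fterm (k : ℕ) (x : ℝ) : ℝ :=
  (2 * Real.sin (2 * x)) ^ (2 * k + 1) / ((2 * k + 1) ^ 2 * (Nat.choose (2 * k) k : ℝ))

noncomputable def Mb (k : ℕ) : ℝ := 2 ^ (2 * k + 1) / ((2 * (k:ℝ) + 1) ^ 2 * cb k)

lemma Mb_pos (k : ℕ) : 0 < Mb k := by
  unfold Mb
  have := cb_pos k
  positivity

lemma summable_Mb : Summable Mb := by
  rw [← summable_nat_add_iff 1]
  have hg : Summable (fun k : ℕ => 1 / ((k:ℝ) ^ (3/2 : ℝ))) :=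
    Real.summable_one_div_nat_rpow.mpr (by norm_num)
  have hg' : Summable (fun k : ℕ => 1 / (((k:ℝ) + 1) ^ (3/2 : ℝ))) := by
    have := (summable_nat_add_iff 1).mpr hg
    simpa using this
  refine Summable.of_nonneg_of_le (fun k => (Mb_pos _).le) (fun k => ?_) hg'
  set m := k + 1 with hm
  have hm1 : 1 ≤ m := by omega
  have hmpos : (0:ℝ) < m := by exact_mod_cast hm1
  have hsq := cb_sqrt_lower m hm1
  have hcb := cb_pos m
  have hsqrt : (0:ℝ) < Real.sqrt m := Real.sqrt_pos.mpr hmpos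
  have hnum : (2:ℝ) ^ (2 * m + 1) ≤ 4 * Real.sqrt m * cb m := by
    have h2 : (2:ℝ) ^ (2 * m + 1) = 2 * 4 ^ m := by
      rw [pow_succ, pow_mul]; norm_num; ring
    rw [h2]; nlinarith [hsq]
  have h1 : Mb m ≤ 4 * Real.sqrt m / (2 * (m:ℝ) + 1) ^ 2 := by
    unfold Mb
    have heq : (4 * Real.sqrt m * cb m) / ((2 * (m:ℝ) + 1) ^ 2 * cb m)
        = 4 * Real.sqrt m / (2 * (m:ℝ) + 1) ^ 2 := by
      field_simp
    rw [← heq]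
    gcongr
  have h3 : 4 * Real.sqrt m / (2 * (m:ℝ) + 1) ^ 2 ≤ Real.sqrt m / (m:ℝ) ^ 2 := by
    rw [div_le_div_iff₀ (by positivity) (by positivity)]
    nlinarith [hsqrt.le, hmpos]
  have h4 : Real.sqrt m / (m:ℝ) ^ 2 = 1 / ((m:ℝ)) ^ (3/2 : ℝ) := by
    rw [Real.sqrt_eq_rpow, div_eq_div_iff (by positivity) (by positivity), one_mul,
      ← Real.rpow_add hmpos]
    norm_num
  have : Mb m ≤ 1 / ((m:ℝ)) ^ (3/2 : ℝ) := by linarith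
  simpa [hm] using this

lemma abs_two_sin_le (z : ℝ) : |2 * Real.sin z| ≤ 2 := by
  rw [abs_mul]
  have h : |Real.sin z| ≤ 1 := abs_le.mpr ⟨Real.neg_one_le_sin z, Real.sin_le_one z⟩
  calc |(2:ℝ)| * |Real.sin z| ≤ |(2:ℝ)| * 1 := by
        apply mul_le_mul_of_nonneg_left h (abs_nonneg _)
    _ = 2 := by norm_num

lemma Fterm_norm_le (k : ℕ) (x : ℝ) : ‖Fterm k x‖ ≤ Mb k := by
  unfold Fterm Mb cb
  have hcb : (0:ℝ) < (Nat.choose (2*k) k : ℝ) := by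
    exact_mod_cast Nat.choose_pos (by omega : k ≤ 2 * k)
  have hd : (0:ℝ) < (2 * (k:ℝ) + 1) ^ 2 * (Nat.choose (2*k) k : ℝ) := by positivity
  rw [Real.norm_eq_abs, abs_div, abs_of_pos hd]
  gcongr
  · rw [abs_pow]
    exact pow_le_pow_left₀ (abs_nonneg _) (abs_two_sin_le _) _


noncomputable def Sfun (x : ℝ) : ℝ := ∑' k : ℕ, Fterm k x

lemma Fterm_continuous (k : ℕ) : Continuous (Fterm k) := by
  unfold Fterm
  fun_prop

lemma Sfun_continuous : Continuous Sfun :=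
  continuous_tsum Fterm_continuous summable_Mb (fun k x => Fterm_norm_le k x)

lemma Fterm_zero (k : ℕ) : Fterm k 0 = 0 := by
  simp [Fterm]

lemma Sfun_zero : Sfun 0 = 0 := by
  unfold Sfun
  simp [Fterm_zero]

noncomputable def Fd (k : ℕ) (x : ℝ) : ℝ :=
  4 * Real.cos (2*x) * (2 * Real.sin (2*x)) ^ (2*k) / ((2*(k:ℝ)+1) * cb k)

lemma hasDerivAt_two_sin_two (x : ℝ) :
    HasDerivAt (fun y : ℝ => 2 * Real.sin (2 * y)) (4 * Real.cos (2 * x)) x := by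
  have h1 : HasDerivAt (fun y : ℝ => 2 * y) 2 x := by
    simpa using (hasDerivAt_id x).const_mul (2:ℝ)
  have h2 : HasDerivAt (fun y : ℝ => Real.sin (2 * y)) (Real.cos (2 * x) * 2) x :=
    (Real.hasDerivAt_sin (2 * x)).comp x h1
  have := h2.const_mul (2:ℝ)
  refine this.congr_deriv ?_
  ring

lemma hasDerivAt_Fterm (k : ℕ) (x : ℝ) : HasDerivAt (Fterm k) (Fd k x) x := by
  have h := ((hasDerivAt_two_sin_two x).pow (2*k+1)).div_const
    ((2 * (k:ℝ) + 1) ^ 2 * (Nat.choose (2 * k) k : ℝ))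
  refine h.congr_deriv (Eq.symm ?_)
  unfold Fd cb
  have hcb : (0:ℝ) < (Nat.choose (2*k) k : ℝ) := by
    exact_mod_cast Nat.choose_pos (by omega : k ≤ 2 * k)
  have hk1 : (0:ℝ) < 2*(k:ℝ)+1 := by positivity
  have he : (2*k+1 : ℕ) - 1 = 2*k := by omega
  rw [he]
  push_cast
  field_simp


lemma abs_sin_le_sin {z b : ℝ} (hb2 : b ≤ π/2) (hz : |z| ≤ b) : |Real.sin z| ≤ Real.sin b := by
  have hb0 : 0 ≤ b := le_trans (abs_nonneg z) hz
  rcases le_or_gt 0 z with hz0 | hz0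
  · rw [abs_of_nonneg hz0] at hz
    rw [abs_of_nonneg (Real.sin_nonneg_of_nonneg_of_le_pi hz0 (by linarith [Real.pi_pos]))]
    exact Real.sin_le_sin_of_le_of_le_pi_div_two (by linarith [Real.pi_pos]) hb2 hz
  · rw [abs_of_neg hz0] at hz
    rw [← abs_neg, ← Real.sin_neg,
      abs_of_nonneg (Real.sin_nonneg_of_nonneg_of_le_pi (by linarith) (by linarith [Real.pi_pos]))]
    exact Real.sin_le_sin_of_le_of_le_pi_div_two (by linarith [Real.pi_pos]) hb2 hz

lemma Fd_norm_le {b : ℝ} (hb0 : 0 < b) (hb : b ≤ π/4) (k : ℕ) {θ : ℝ} (hθ : θ ∈ Ioo (-b) b) :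
    ‖Fd k θ‖ ≤ 4 * (((2 * Real.sin (2*b))^2/4)^k) := by
  set r := 2 * Real.sin (2*b) with hr
  have hpi := Real.pi_pos
  have hr0 : 0 ≤ r := by
    have : 0 ≤ Real.sin (2*b) := Real.sin_nonneg_of_nonneg_of_le_pi (by linarith) (by linarith)
    positivity
  have hcb := cb_pos k
  have hsin : |2 * Real.sin (2*θ)| ≤ r := by
    rw [hr, abs_mul, abs_two]
    have h1 : |Real.sin (2*θ)| ≤ Real.sin (2*b) := by
      apply abs_sin_le_sin (by linarith)
      rw [abs_mul, abs_two]
      have h4 : |θ| ≤ b := le_of_lt (abs_lt.mpr ⟨hθ.1, hθ.2⟩)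
      linarith
    linarith
  have hd : (0:ℝ) < (2*(k:ℝ)+1) * cb k := by positivity
  unfold Fd
  rw [Real.norm_eq_abs, abs_div, abs_of_pos hd]
  have hnum : |4 * Real.cos (2*θ) * (2 * Real.sin (2*θ)) ^ (2*k)| ≤ 4 * r ^ (2*k) := by
    rw [abs_mul, abs_mul, abs_pow]
    have hc : |Real.cos (2*θ)| ≤ 1 := abs_le.mpr ⟨Real.neg_one_le_cos _, Real.cos_le_one _⟩
    have hp : |2 * Real.sin (2*θ)| ^ (2*k) ≤ r ^ (2*k) :=
      pow_le_pow_left₀ (abs_nonneg _) hsin _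
    have h4 : |(4:ℝ)| = 4 := by norm_num
    rw [h4]
    calc 4 * |Real.cos (2*θ)| * |2 * Real.sin (2*θ)| ^ (2*k)
        ≤ 4 * 1 * (r ^ (2*k)) := by
          apply mul_le_mul (by nlinarith [abs_nonneg (Real.cos (2*θ))]) hp (by positivity)
            (by norm_num)
      _ = 4 * r ^ (2*k) := by ring
  have h4k : (4:ℝ)^k ≤ (2*(k:ℝ)+1) * cb k := cb_lower k
  calc |4 * Real.cos (2*θ) * (2 * Real.sin (2*θ)) ^ (2*k)| / ((2*(k:ℝ)+1) * cb k)
      ≤ (4 * r ^ (2*k)) / ((2*(k:ℝ)+1) * cb k) := by gcongr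
    _ ≤ (4 * r ^ (2*k)) / (4:ℝ)^k := by
        apply div_le_div_of_nonneg_left (by positivity) (by positivity) h4k
    _ = 4 * ((r^2/4)^k) := by
        rw [div_pow, pow_mul]
        ring
  
lemma hasDerivAt_Sfun {b : ℝ} (hb0 : 0 < b) (hb : b < π/4) {y : ℝ} (hy : y ∈ Ioo (-b) b) :
    HasDerivAt Sfun (∑' k, Fd k y) y := by
  have hpi := Real.pi_pos
  set r := 2 * Real.sin (2*b) with hr
  have hr2 : r < 2 := by
    have : Real.sin (2*b) < 1 := by
      have := Real.sin_lt_sin_of_lt_of_le_pi_div_two (x := 2*b) (y := π/2)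
        (by linarith) (le_refl _) (by linarith)
      simpa using this
    simp only [hr]; linarith
  have hr0 : 0 ≤ r := by
    have : 0 ≤ Real.sin (2*b) := Real.sin_nonneg_of_nonneg_of_le_pi (by linarith) (by linarith)
    positivity
  have hq : r^2/4 < 1 := by nlinarith
  have hsumu : Summable (fun k : ℕ => 4 * ((r^2/4)^k)) :=
    (summable_geometric_of_lt_one (by positivity) hq).mul_left 4
  exact hasDerivAt_tsum_of_isPreconnected hsumu isOpen_Ioo (convex_Ioo _ _).isPreconnected
    (fun k θ _ => hasDerivAt_Fterm k θ)
    (fun k θ hθ => Fd_norm_le hb0 hb.le k hθ)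
    (show (0:ℝ) ∈ Ioo (-b) b from ⟨by linarith, hb0⟩)
    (by simp only [Fterm_zero]; exact summable_zero)
    hy


noncomputable def psiT (k : ℕ) (x : ℝ) : ℝ :=
  4^k * (Real.sin (2*x))^(2*k+1) * Real.cos (2*x) / ((2*(k:ℝ)+1) * cb k)

noncomputable def Aa (k : ℕ) (x : ℝ) : ℝ := 2 * 4^k * (Real.sin (2*x))^(2*k) / cb k

noncomputable def Psi (x : ℝ) : ℝ := ∑' k, psiT k x

lemma hasDerivAt_psiT (k : ℕ) (x : ℝ) :
    HasDerivAt (psiT k) (Aa k x - Aa (k+1) x) x := by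
  have hs : HasDerivAt (fun y : ℝ => Real.sin (2*y)) (Real.cos (2*x) * 2) x := by
    have h1 : HasDerivAt (fun y : ℝ => 2 * y) 2 x := by
      simpa using (hasDerivAt_id x).const_mul (2:ℝ)
    exact (Real.hasDerivAt_sin (2*x)).comp x h1
  have hc : HasDerivAt (fun y : ℝ => Real.cos (2*y)) (-Real.sin (2*x) * 2) x := by
    have h1 : HasDerivAt (fun y : ℝ => 2 * y) 2 x := by
      simpa using (hasDerivAt_id x).const_mul (2:ℝ)
    exact (Real.hasDerivAt_cos (2*x)).comp x h1
  have hp := hs.pow (2*k+1)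
  have hm := hp.mul hc
  have h := (hm.div_const ((2*(k:ℝ)+1) * cb k)).const_mul ((4:ℝ)^k)
  refine HasDerivAt.congr_deriv (h.congr_of_eventuallyEq (Filter.Eventually.of_forall fun y => ?_)) (Eq.symm ?_)
  · simp only [Pi.mul_apply, Pi.pow_apply]
    unfold psiT
    ring
  have he : (2*k+1 : ℕ) - 1 = 2*k := by omega
  rw [he]
  have hcb := cb_pos k
  have hcb1 := cb_pos (k+1)
  have hk1 : (0:ℝ) < 2*(k:ℝ)+1 := by positivity
  have hcs := cb_succ k
  have hcos : Real.cos (2*x)^2 = 1 - Real.sin (2*x)^2 := Real.cos_sq' (2*x)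
  unfold Aa
  simp only [Pi.pow_apply]
  set s := Real.sin (2*x)
  set c := Real.cos (2*x)
  have epow : s ^ (2*(k+1)) = s ^ (2*k) * s^2 := by ring
  field_simp
  rw [epow]
  push_cast
  linear_combination (-(4:ℝ)^k * s^(2*k) * (2*(k:ℝ)+1) * cb (k+1)) * hcos
    + (2 * (4:ℝ)^k * s^(2*k) * s^2) * hcs


lemma Aa_norm_le (k : ℕ) {q : ℝ} {x : ℝ} (hs : (Real.sin (2*x))^2 ≤ q) :
    |Aa k x| ≤ 2 * (2*(k:ℝ)+1) * q^k := by
  have hq0 : 0 ≤ q := le_trans (sq_nonneg _) hs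
  have hcb := cb_pos k
  unfold Aa
  have habs : |2 * 4^k * (Real.sin (2*x))^(2*k)| = 2 * 4^k * ((Real.sin (2*x))^2)^k := by
    rw [abs_mul, abs_mul, abs_pow, abs_pow, abs_two,
      abs_of_nonneg (by norm_num : (0:ℝ) ≤ (4:ℝ)), pow_mul, sq_abs]
  rw [abs_div, abs_of_pos hcb, habs]
  have h2 : ((Real.sin (2*x))^2)^k ≤ q^k := pow_le_pow_left₀ (sq_nonneg _) hs k
  have h3 : (4:ℝ)^k / cb k ≤ 2*(k:ℝ)+1 := by
    rw [div_le_iff₀ hcb]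
    have := cb_lower k
    linarith
  calc 2 * 4^k * ((Real.sin (2*x))^2)^k / cb k ≤ 2 * 4^k * q^k / cb k := by gcongr
    _ = 2 * ((4:ℝ)^k / cb k) * q^k := by ring
    _ ≤ 2 * (2*(k:ℝ)+1) * q^k := by
        nlinarith [h3, pow_nonneg hq0 k, pow_pos (show (0:ℝ) < 4 by norm_num) k,
          div_nonneg (pow_nonneg (show (0:ℝ) ≤ 4 by norm_num) k) hcb.le]

lemma psiT_zero (k : ℕ) : psiT k 0 = 0 := by simp [psiT]

lemma summable_ubound {q : ℝ} (hq0 : 0 ≤ q) (hq : q < 1) :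
    Summable (fun k : ℕ => 16 * ((k:ℝ)+1) * q^k) := by
  have h1 : Summable (fun k : ℕ => (k:ℝ)^1 * q^k) := by
    apply summable_pow_mul_geometric_of_norm_lt_one
    rw [Real.norm_eq_abs, abs_of_nonneg hq0]; exact hq
  have h2 : Summable (fun k : ℕ => q^k) := summable_geometric_of_lt_one hq0 hq
  apply Summable.congr (((h1.add h2).mul_left 16)) ?_
  intro k
  push_cast
  ring

lemma telescope_norm_le (k : ℕ) {q : ℝ} {x : ℝ} (hs : (Real.sin (2*x))^2 ≤ q) (hq : q ≤ 1) :
    ‖Aa k x - Aa (k+1) x‖ ≤ 16 * ((k:ℝ)+1) * q^k := by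
  have hq0 : 0 ≤ q := le_trans (sq_nonneg _) hs
  have h1 := Aa_norm_le k hs
  have h2 := Aa_norm_le (k+1) hs
  have hqk : q^(k+1) ≤ q^k := by
    apply pow_le_pow_of_le_one hq0 hq
    omega
  rw [Real.norm_eq_abs]
  have h3 := abs_sub (Aa k x) (Aa (k+1) x)
  push_cast at h2 ⊢
  have hp := pow_nonneg hq0 k
  calc |Aa k x - Aa (k+1) x| ≤ |Aa k x| + |Aa (k+1) x| := abs_sub _ _
    _ ≤ 2 * (2*(k:ℝ)+1) * q^k + 2 * (2*((k:ℝ)+1)+1) * q^(k+1) := by linarith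
    _ ≤ 16 * ((k:ℝ)+1) * q^k := by nlinarith [hqk, hp, pow_nonneg hq0 (k+1)]

lemma hasDerivAt_Psi {b : ℝ} (hb0 : 0 < b) (hb : b < π/4) {y : ℝ} (hy : y ∈ Ioo (-b) b) :
    HasDerivAt Psi (∑' k, (Aa k y - Aa (k+1) y)) y := by
  have hpi := Real.pi_pos
  set q := (Real.sin (2*b))^2 with hqdef
  have hsb : Real.sin (2*b) < 1 := by
    have := Real.sin_lt_sin_of_lt_of_le_pi_div_two (x := 2*b) (y := π/2)
      (by linarith) (le_refl _) (by linarith)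
    simpa using this
  have hsb0 : 0 ≤ Real.sin (2*b) :=
    Real.sin_nonneg_of_nonneg_of_le_pi (by linarith) (by linarith)
  have hq1 : q < 1 := by nlinarith
  have hq0 : 0 ≤ q := sq_nonneg _
  have hbound : ∀ (k : ℕ) (θ : ℝ), θ ∈ Ioo (-b) b → (Real.sin (2*θ))^2 ≤ q := by
    intro k θ hθ
    have h1 : |Real.sin (2*θ)| ≤ Real.sin (2*b) := by
      apply abs_sin_le_sin (by linarith)
      rw [abs_mul, abs_two]
      have h4 : |θ| ≤ b := le_of_lt (abs_lt.mpr ⟨hθ.1, hθ.2⟩)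
      linarith
    rw [hqdef, ← sq_abs]
    exact pow_le_pow_left₀ (abs_nonneg _) h1 2
  exact hasDerivAt_tsum_of_isPreconnected (summable_ubound hq0 hq1) isOpen_Ioo
    (convex_Ioo _ _).isPreconnected
    (fun k θ _ => hasDerivAt_psiT k θ)
    (fun k θ hθ => telescope_norm_le k (hbound k θ hθ) hq1.le)
    (show (0:ℝ) ∈ Ioo (-b) b from ⟨by linarith, hb0⟩)
    (by simp only [psiT_zero]; exact summable_zero)
    hy

lemma Aa_zero_eq (y : ℝ) : Aa 0 y = 2 := by
  simp [Aa, cb]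

lemma sum_telescope {y : ℝ} (hy : (Real.sin (2*y))^2 < 1) :
    (∑' k, (Aa k y - Aa (k+1) y)) = 2 := by
  set q := (Real.sin (2*y))^2 with hq
  have hq0 : 0 ≤ q := sq_nonneg _
  have hnorm : Summable (fun k => ‖Aa k y - Aa (k+1) y‖) := by
    apply Summable.of_nonneg_of_le (fun k => norm_nonneg _)
      (fun k => telescope_norm_le k (le_refl _) hy.le)
    exact summable_ubound hq0 hy
  have hAa_to_zero : Tendsto (fun n => Aa n y) atTop (𝓝 0) := by
    apply squeeze_zero_norm (fun n => Aa_norm_le n (le_refl _))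
    have hsum2 : Summable (fun k : ℕ => 2 * (2*(k:ℝ)+1) * q^k) := by
      apply Summable.of_nonneg_of_le (fun k => by positivity)
        (fun k => ?_) (summable_ubound hq0 hy)
      have hp : (0:ℝ) ≤ q^k := pow_nonneg hq0 k
      nlinarith [hp]
    exact hsum2.tendsto_atTop_zero
  have hts : HasSum (fun k => Aa k y - Aa (k+1) y) 2 := by
    rw [hasSum_iff_tendsto_nat_of_summable_norm hnorm]
    have heq : ∀ n, ∑ i ∈ Finset.range n, (Aa i y - Aa (i+1) y) = Aa 0 y - Aa n y :=
      fun n => Finset.sum_range_sub' (fun i => Aa i y) n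
    simp only [heq, Aa_zero_eq]
    have : Tendsto (fun n => 2 - Aa n y) atTop (𝓝 (2 - 0)) :=
      tendsto_const_nhds.sub hAa_to_zero
    simpa using this
  exact hts.tsum_eq


lemma psiT_norm_le_small {a : ℝ} (ha : a ∈ Ioc 0 (π/12)) (k : ℕ) :
    ‖psiT k a‖ ≤ Real.sin (2*a) * (1/4)^k := by
  have hpi := Real.pi_pos
  have hs0 : 0 ≤ Real.sin (2*a) :=
    Real.sin_nonneg_of_nonneg_of_le_pi (by linarith [ha.1]) (by nlinarith [ha.1, ha.2])
  have hs12 : Real.sin (2*a) ≤ 1/2 := by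
    have h1 : Real.sin (2*a) ≤ Real.sin (π/6) := by
      apply Real.sin_le_sin_of_le_of_le_pi_div_two (by linarith [ha.1]) (by linarith)
        (by linarith [ha.2])
    rwa [Real.sin_pi_div_six] at h1
  have hcb := cb_pos k
  unfold psiT
  set s := Real.sin (2*a) with hsdef
  have hd : (0:ℝ) < (2*(k:ℝ)+1) * cb k := by positivity
  rw [Real.norm_eq_abs, abs_div, abs_of_pos hd, abs_mul, abs_mul, abs_pow, abs_pow,
    abs_of_nonneg (by norm_num : (0:ℝ) ≤ (4:ℝ)), abs_of_nonneg hs0]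
  have hcle : |Real.cos (2*a)| ≤ 1 := abs_le.mpr ⟨Real.neg_one_le_cos _, Real.cos_le_one _⟩
  have hps : s^(2*k+1) ≤ s * (1/4)^k := by
    have h1 : s^(2*k+1) = s * (s^2)^k := by rw [pow_succ', pow_mul]
    rw [h1]
    have h2 : (s^2)^k ≤ (1/4 : ℝ)^k := by
      apply pow_le_pow_left₀ (sq_nonneg _) (by nlinarith) k
    nlinarith [pow_nonneg (sq_nonneg s) k, pow_nonneg (show (0:ℝ) ≤ 1/4 by norm_num) k]
  have h4cb : (4:ℝ)^k ≤ (2*(k:ℝ)+1) * cb k := cb_lower k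
  -- |4^k * s^(2k+1) * cos| / ((2k+1) cb k) ≤ 4^k * (s*(1/4)^k) / 4^k = s*(1/4)^k
  have hnum : (4:ℝ)^k * s^(2*k+1) * |Real.cos (2*a)| ≤ 4^k * (s * (1/4)^k) := by
    have hp4 : (0:ℝ) < 4^k := by positivity
    have hss : 0 ≤ s^(2*k+1) := pow_nonneg hs0 _
    nlinarith [mul_le_mul_of_nonneg_left hps (le_of_lt hp4),
      mul_le_mul_of_nonneg_left hcle (mul_nonneg hp4.le hss)]
  calc (4:ℝ)^k * s^(2*k+1) * |Real.cos (2*a)| / ((2*(k:ℝ)+1) * cb k)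
      ≤ (4:ℝ)^k * (s * (1/4)^k) / ((2*(k:ℝ)+1) * cb k) := by gcongr
    _ ≤ (4:ℝ)^k * (s * (1/4)^k) / (4:ℝ)^k := by
        apply div_le_div_of_nonneg_left (by positivity) (by positivity) h4cb
    _ = s * (1/4)^k := by field_simp

lemma Psi_norm_le_small {a : ℝ} (ha : a ∈ Ioc 0 (π/12)) :
    ‖Psi a‖ ≤ (8/3) * a := by
  have hpi := Real.pi_pos
  have hgeo : Summable (fun k : ℕ => Real.sin (2*a) * (1/4 : ℝ)^k) :=
    (summable_geometric_of_lt_one (by norm_num) (by norm_num)).mul_left _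
  have hsumm : Summable fun k => ‖psiT k a‖ :=
    Summable.of_nonneg_of_le (fun k => norm_nonneg _) (psiT_norm_le_small ha) hgeo
  have h1 : ‖Psi a‖ ≤ ∑' k, Real.sin (2*a) * (1/4 : ℝ)^k :=
    (norm_tsum_le_tsum_norm hsumm).trans (Summable.tsum_le_tsum (psiT_norm_le_small ha) hsumm hgeo)
  have h2 : ∑' k : ℕ, Real.sin (2*a) * (1/4 : ℝ)^k = Real.sin (2*a) * (4/3) := by
    rw [tsum_mul_left, tsum_geometric_of_lt_one (by norm_num) (by norm_num)]
    norm_num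
  have hsle : Real.sin (2*a) ≤ 2*a := by
    have := Real.sin_le (by linarith [ha.1] : (0:ℝ) ≤ 2*a)
    linarith
  have hs0 : 0 ≤ Real.sin (2*a) :=
    Real.sin_nonneg_of_nonneg_of_le_pi (by linarith [ha.1]) (by nlinarith [ha.1, ha.2])
  rw [h2] at h1
  nlinarith [h1, ha.1]

lemma Psi_tendsto_zero : Tendsto Psi (𝓝[>] (0:ℝ)) (𝓝 0) := by
  have hpi := Real.pi_pos
  refine squeeze_zero_norm' (a := fun x => (8/3) * x) ?_ ?_
  · filter_upwards [Ioo_mem_nhdsGT_of_mem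
      (show (0:ℝ) ∈ Ico (0:ℝ) (π/12) from ⟨le_refl _, by positivity⟩)] with a ha
    exact Psi_norm_le_small ⟨ha.1, ha.2.le⟩
  · have : Tendsto (fun a : ℝ => (8/3) * a) (𝓝 0) (𝓝 ((8/3) * 0)) :=
      (continuous_const.mul continuous_id).tendsto 0
    simpa using this.mono_left nhdsWithin_le_nhds

lemma hasDerivAt_Psi2 {t : ℝ} (ht : t ∈ Ioo 0 (π/4)) : HasDerivAt Psi 2 t := by
  have hpi := Real.pi_pos
  obtain ⟨ht0, ht4⟩ := ht
  set b := (t + π/4)/2 with hbdef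
  have hb0 : 0 < b := by rw [hbdef]; linarith
  have hb4 : b < π/4 := by rw [hbdef]; linarith
  have htmem : t ∈ Ioo (-b) b := ⟨by rw [hbdef]; linarith, by rw [hbdef]; linarith⟩
  have h := hasDerivAt_Psi hb0 hb4 htmem
  have hsin : (Real.sin (2*t))^2 < 1 := by
    have h1 : Real.sin (2*t) < 1 := by
      have := Real.sin_lt_sin_of_lt_of_le_pi_div_two (x := 2*t) (y := π/2)
        (by linarith) le_rfl (by linarith)
      simpa using this
    have h0 : 0 ≤ Real.sin (2*t) := Real.sin_nonneg_of_nonneg_of_le_pi (by linarith) (by linarith)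
    nlinarith
  rwa [sum_telescope hsin] at h


lemma Psi_eq {y : ℝ} (hy : y ∈ Ioo 0 (π/4)) : Psi y = 2*y := by
  have hpi := Real.pi_pos
  obtain ⟨hy0, hy4⟩ := hy
  have key : ∀ a ∈ Ioc (0:ℝ) y, Psi a - 2*a = Psi y - 2*y := by
    intro a ha
    have hftc := intervalIntegral.integral_eq_sub_of_hasDerivAt
      (f := Psi) (f' := fun _ => (2:ℝ)) (a := a) (b := y)
      (fun t ht => by
        rw [uIcc_of_le ha.2] at ht
        exact hasDerivAt_Psi2 ⟨lt_of_lt_of_le ha.1 ht.1, lt_of_le_of_lt ht.2 hy4⟩)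
      (intervalIntegrable_const)
    rw [intervalIntegral.integral_const] at hftc
    simp only [smul_eq_mul] at hftc
    linarith
  have h1 : Tendsto (fun a => Psi a - 2*a) (𝓝[>] (0:ℝ)) (𝓝 0) := by
    have h2 : Tendsto (fun a : ℝ => 2*a) (𝓝[>] (0:ℝ)) (𝓝 0) := by
      have : Tendsto (fun a : ℝ => 2*a) (𝓝 0) (𝓝 (2*0)) :=
        (continuous_const.mul continuous_id).tendsto 0
      simpa using this.mono_left nhdsWithin_le_nhds
    simpa using Psi_tendsto_zero.sub h2
  have h3 : Tendsto (fun a => Psi a - 2*a) (𝓝[>] (0:ℝ)) (𝓝 (Psi y - 2*y)) := by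
    apply Tendsto.congr' ?_ (tendsto_const_nhds (α := ℝ))
    filter_upwards [Ioc_mem_nhdsGT_of_mem
      (show (0:ℝ) ∈ Ico (0:ℝ) y from ⟨le_refl _, hy0⟩)] with a ha
    exact (key a ha).symm
  have := tendsto_nhds_unique h3 h1
  linarith

lemma sum_Fd_eq {y : ℝ} (hy : y ∈ Ioo 0 (π/4)) :
    ∑' k, Fd k y = 8*y / Real.sin (2*y) := by
  have hpi := Real.pi_pos
  obtain ⟨hy0, hy4⟩ := hy
  have hs0 : 0 < Real.sin (2*y) := Real.sin_pos_of_pos_of_lt_pi (by linarith) (by linarith)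
  have hFd : ∀ k, Fd k y = (4 / Real.sin (2*y)) * psiT k y := by
    intro k
    unfold Fd psiT
    rw [mul_pow]
    have h2 : (2:ℝ)^(2*k) = 4^k := by rw [pow_mul]; norm_num
    rw [h2]
    have h3 : (Real.sin (2*y))^(2*k+1) = (Real.sin (2*y))^(2*k) * Real.sin (2*y) :=
      pow_succ _ _
    rw [h3]
    have hcb := cb_pos k
    field_simp
  calc ∑' k, Fd k y = ∑' k, (4 / Real.sin (2*y)) * psiT k y := tsum_congr hFd
    _ = (4 / Real.sin (2*y)) * Psi y := tsum_mul_left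
    _ = (4 / Real.sin (2*y)) * (2*y) := by rw [Psi_eq ⟨hy0, hy4⟩]
    _ = 8*y / Real.sin (2*y) := by field_simp; ring

lemma hasDerivAt_Sfun2 {t : ℝ} (ht : t ∈ Ioo 0 (π/4)) :
    HasDerivAt Sfun (8*t / Real.sin (2*t)) t := by
  have hpi := Real.pi_pos
  obtain ⟨ht0, ht4⟩ := ht
  set b := (t + π/4)/2 with hbdef
  have hb0 : 0 < b := by rw [hbdef]; linarith
  have hb4 : b < π/4 := by rw [hbdef]; linarith
  have htmem : t ∈ Ioo (-b) b := ⟨by rw [hbdef]; linarith, by rw [hbdef]; linarith⟩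
  have h := hasDerivAt_Sfun hb0 hb4 htmem
  rwa [sum_Fd_eq ⟨ht0, ht4⟩] at h


noncomputable def Gfun (y : ℝ) : ℝ := y * Real.log (Real.tan y) - (1/4) * Sfun y

lemma hasDerivAt_Gfun {y : ℝ} (hy : y ∈ Ioo 0 (π/4)) :
    HasDerivAt Gfun (Real.log (Real.tan y)) y := by
  have hpi := Real.pi_pos
  obtain ⟨hy0, hy4⟩ := hy
  have hcos : Real.cos y ≠ 0 := by
    have : 0 < Real.cos y := Real.cos_pos_of_mem_Ioo ⟨by linarith, by linarith⟩
    linarith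
  have hsin : 0 < Real.sin y := Real.sin_pos_of_pos_of_lt_pi hy0 (by linarith)
  have htan : 0 < Real.tan y := by
    rw [Real.tan_eq_sin_div_cos]
    apply div_pos hsin
    have : 0 < Real.cos y := Real.cos_pos_of_mem_Ioo ⟨by linarith, by linarith⟩
    exact this
  have hlog : HasDerivAt (fun z => Real.log (Real.tan z)) ((Real.tan y)⁻¹ * (1 / Real.cos y ^ 2)) y :=
    (Real.hasDerivAt_log htan.ne').comp y (Real.hasDerivAt_tan hcos)
  have hxlog := (hasDerivAt_id y).mul hlog
  have hS := (hasDerivAt_Sfun2 ⟨hy0, hy4⟩).const_mul (1/4 : ℝ)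
  have h := hxlog.sub hS
  refine h.congr_deriv (Eq.symm ?_)
  simp only [id_eq]
  have hs2 : Real.sin (2*y) = 2 * Real.sin y * Real.cos y := Real.sin_two_mul y
  rw [Real.tan_eq_sin_div_cos, hs2]
  have hcpos : 0 < Real.cos y := Real.cos_pos_of_mem_Ioo ⟨by linarith, by linarith⟩
  field_simp
  ring

lemma tan_le_one_of_mem {θ : ℝ} (h : θ ∈ Ioc 0 (π/4)) : Real.tan θ ≤ 1 := by
  rcases eq_or_lt_of_le h.2 with he | hl
  · rw [he, Real.tan_pi_div_four]
  · have hpi := Real.pi_pos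
    have := Real.tan_lt_tan_of_nonneg_of_lt_pi_div_two h.1.le (by linarith) hl
    rw [Real.tan_pi_div_four] at this
    exact this.le

lemma le_tan_of_mem {θ : ℝ} (h : θ ∈ Ioc 0 (π/4)) : θ ≤ Real.tan θ := by
  have hpi := Real.pi_pos
  exact (Real.lt_tan h.1 (by linarith [h.2])).le

open MeasureTheory in
lemma integrableOn_neg_log : IntegrableOn (fun θ => -Real.log θ) (Ioc 0 (π/4)) volume := by
  have hpi := Real.pi_pos
  apply intervalIntegral.integrableOn_deriv_of_nonneg (g := fun x => x - x * Real.log x)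
  · exact (continuous_id.sub continuous_mul_log).continuousOn
  · intro x hx
    have h1 : HasDerivAt (fun x : ℝ => x * Real.log x) (1 * Real.log x + x * x⁻¹) x :=
      (hasDerivAt_id x).mul (Real.hasDerivAt_log hx.1.ne')
    have h2 := (hasDerivAt_id x).sub h1
    refine h2.congr_deriv (Eq.symm ?_)
    rw [one_mul, mul_inv_cancel₀ (ne_of_gt hx.1)]
    ring
  · intro x hx
    have hx1 : x ≤ 1 := by nlinarith [hx.2, Real.pi_lt_d2]
    have := Real.log_nonpos hx.1.le hx1
    linarith

lemma continuousOn_logtan : ContinuousOn (fun θ => Real.log (Real.tan θ)) (Ioc 0 (π/4)) := by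
  have hpi := Real.pi_pos
  apply ContinuousOn.log
  · intro θ hθ
    exact (Real.continuousAt_tan.mpr (by
      have : 0 < Real.cos θ := Real.cos_pos_of_mem_Ioo ⟨by linarith [hθ.1], by linarith [hθ.2]⟩
      linarith)).continuousWithinAt
  · intro θ hθ
    have := lt_of_lt_of_le hθ.1 (le_tan_of_mem hθ)
    linarith

open MeasureTheory in
lemma integrableOn_logtan : IntegrableOn (fun θ => Real.log (Real.tan θ)) (Ioc 0 (π/4)) volume := by
  have hpi := Real.pi_pos
  apply MeasureTheory.Integrable.mono' integrableOn_neg_log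
    (continuousOn_logtan.aestronglyMeasurable measurableSet_Ioc)
  rw [MeasureTheory.ae_restrict_iff' measurableSet_Ioc]
  apply MeasureTheory.ae_of_all
  intro θ hθ
  have h1 : Real.log θ ≤ Real.log (Real.tan θ) := Real.log_le_log hθ.1 (le_tan_of_mem hθ)
  have h2 : Real.log (Real.tan θ) ≤ 0 := Real.log_nonpos
    (le_trans hθ.1.le (le_tan_of_mem hθ)) (tan_le_one_of_mem hθ)
  have h3 : Real.log θ ≤ 0 := Real.log_nonpos hθ.1.le (by nlinarith [hθ.2, Real.pi_lt_d2])
  rw [Real.norm_eq_abs, abs_of_nonpos h2]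
  linarith

open MeasureTheory in
lemma intervalIntegrable_logtan : IntervalIntegrable (fun θ => Real.log (Real.tan θ)) volume 0 (π/4) := by
  have hpi := Real.pi_pos
  rw [intervalIntegrable_iff_integrableOn_Ioc_of_le (by linarith)]
  exact integrableOn_logtan


lemma abs_logtan_le {a y : ℝ} (hy4 : y < π/4) (ha : a ∈ Ioc 0 y) (hy0 : 0 < y) :
    ‖a * Real.log (Real.tan a)‖ ≤ |a * Real.log a| + a := by
  have hpi := Real.pi_pos
  have ha0 : 0 < a := ha.1
  have ha4 : a ≤ π/4 := le_trans ha.2 hy4.le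
  have hmem : a ∈ Ioc (0:ℝ) (π/4) := ⟨ha0, ha4⟩
  have hsin0 : 0 ≤ Real.sin a := Real.sin_nonneg_of_nonneg_of_le_pi ha0.le (by linarith)
  have hcge : Real.cos (π/4) ≤ Real.cos a :=
    Real.cos_le_cos_of_nonneg_of_le_pi ha0.le (by linarith) ha4
  have hsqrt2 : (1:ℝ) ≤ Real.sqrt 2 := by
    nlinarith [Real.sq_sqrt (show (0:ℝ) ≤ 2 by norm_num), Real.sqrt_nonneg 2]
  have hc12 : (1:ℝ)/2 ≤ Real.cos a := by
    rw [Real.cos_pi_div_four] at hcge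
    linarith
  have htle : Real.tan a ≤ 2 * a := by
    rw [Real.tan_eq_sin_div_cos]
    have h1 : Real.sin a / Real.cos a ≤ Real.sin a / (1/2) :=
      div_le_div_of_nonneg_left hsin0 (by norm_num) hc12
    have h2 : Real.sin a ≤ a := Real.sin_le ha0.le
    calc Real.sin a / Real.cos a ≤ Real.sin a / (1/2) := h1
      _ = 2 * Real.sin a := by ring
      _ ≤ 2 * a := by linarith
  have htpos : 0 < Real.tan a := lt_of_lt_of_le ha0 (le_tan_of_mem hmem)
  have hll : Real.log a ≤ Real.log (Real.tan a) := Real.log_le_log ha0 (le_tan_of_mem hmem)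
  have hlu : Real.log (Real.tan a) ≤ Real.log 2 + Real.log a := by
    have := Real.log_le_log htpos htle
    rwa [Real.log_mul (by norm_num) ha0.ne'] at this
  have hlog2 : Real.log 2 ≤ 1 := by
    have := Real.log_two_lt_d9
    linarith
  have habs : |Real.log (Real.tan a)| ≤ |Real.log a| + 1 := by
    rcases le_or_gt 0 (Real.log (Real.tan a)) with h | h
    · rw [abs_of_nonneg h]
      have : Real.log a ≤ |Real.log a| := le_abs_self _
      linarith
    · rw [abs_of_neg h]
      have : -Real.log a ≤ |Real.log a| := neg_le_abs _
      linarith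
  rw [Real.norm_eq_abs, abs_mul, abs_of_pos ha0, abs_mul, abs_of_pos ha0]
  nlinarith [habs, ha0.le, abs_nonneg (Real.log a)]

open MeasureTheory in
lemma main_interior {y : ℝ} (hy : y ∈ Ioo 0 (π/4)) :
    (∫ θ in (0:ℝ)..y, Real.log (Real.tan θ)) = Gfun y := by
  have hpi := Real.pi_pos
  obtain ⟨hy0, hy4⟩ := hy
  set f := fun θ => Real.log (Real.tan θ) with hf
  set l := 𝓝[Ioc 0 y] (0:ℝ) with hl
  have hlne : l.NeBot := by
    rw [hl, ← mem_closure_iff_nhdsWithin_neBot, closure_Ioc hy0.ne]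
    exact ⟨le_refl _, hy0.le⟩
  have hII : IntervalIntegrable f volume 0 y := by
    apply intervalIntegrable_logtan.mono_set
    rw [uIcc_of_le hy0.le, uIcc_of_le (by linarith)]
    exact Icc_subset_Icc le_rfl hy4.le
  have key : ∀ a ∈ Ioc (0:ℝ) y,
      (∫ θ in (0:ℝ)..y, f θ) = (∫ θ in (0:ℝ)..a, f θ) + (Gfun y - Gfun a) := by
    intro a ha
    have hIIa : IntervalIntegrable f volume 0 a := by
      apply hII.mono_set
      rw [uIcc_of_le ha.1.le, uIcc_of_le hy0.le]
      exact Icc_subset_Icc le_rfl ha.2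
    have hIIay : IntervalIntegrable f volume a y := by
      apply ContinuousOn.intervalIntegrable
      rw [uIcc_of_le ha.2]
      exact continuousOn_logtan.mono (fun θ hθ =>
        ⟨lt_of_lt_of_le ha.1 hθ.1, le_trans hθ.2 hy4.le⟩)
    have hftc := intervalIntegral.integral_eq_sub_of_hasDerivAt (f := Gfun) (f' := f)
      (a := a) (b := y)
      (fun t ht => by
        rw [uIcc_of_le ha.2] at ht
        exact hasDerivAt_Gfun ⟨lt_of_lt_of_le ha.1 ht.1, lt_of_le_of_lt ht.2 hy4⟩) hIIay
    have hsplit := intervalIntegral.integral_add_adjacent_intervals hIIa hIIay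
    rw [hftc] at hsplit
    linarith [hsplit]
  have h1 : Tendsto (fun a => ∫ θ in (0:ℝ)..a, f θ) l (𝓝 0) := by
    have hIcc : IntegrableOn f (uIcc 0 (π/4)) volume := by
      rw [uIcc_of_le (by linarith), integrableOn_Icc_iff_integrableOn_Ioc]
      exact integrableOn_logtan
    have hcont := intervalIntegral.continuousOn_primitive_interval hIcc
    have hc0 := (hcont 0 (by rw [uIcc_of_le (by linarith)]; exact ⟨le_refl _, by linarith⟩)).tendsto
    rw [intervalIntegral.integral_same] at hc0
    apply hc0.mono_left
    rw [hl]
    apply nhdsWithin_mono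
    rw [uIcc_of_le (by linarith)]
    intro a ha
    exact ⟨ha.1.le, le_trans ha.2 hy4.le⟩
  have h2 : Tendsto Gfun l (𝓝 0) := by
    have hSc : Tendsto (fun a => (1/4) * Sfun a) l (𝓝 ((1/4) * Sfun 0)) :=
      ((continuous_const.mul Sfun_continuous).tendsto 0).mono_left nhdsWithin_le_nhds
    rw [Sfun_zero, mul_zero] at hSc
    have hlt : Tendsto (fun a => a * Real.log (Real.tan a)) l (𝓝 0) := by
      apply squeeze_zero_norm' (a := fun x => |x * Real.log x| + x)
      · filter_upwards [self_mem_nhdsWithin] with a ha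
        exact abs_logtan_le hy4 ha hy0
      · have hten : Tendsto (fun x : ℝ => |x * Real.log x| + x) (𝓝 0)
            (𝓝 (|(0:ℝ) * Real.log 0| + 0)) :=
          (continuous_mul_log.abs.add continuous_id).tendsto 0
        simp only [zero_mul, abs_zero, add_zero] at hten
        exact hten.mono_left nhdsWithin_le_nhds
    have := hlt.sub hSc
    rw [sub_zero] at this
    exact this.congr (fun a => by rw [Gfun])
  have h3 : Tendsto (fun a => (∫ θ in (0:ℝ)..a, f θ) + (Gfun y - Gfun a)) l
      (𝓝 (0 + (Gfun y - 0))) := h1.add (tendsto_const_nhds.sub h2)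
  have h4 : Tendsto (fun _ : ℝ => ∫ θ in (0:ℝ)..y, f θ) l (𝓝 (∫ θ in (0:ℝ)..y, f θ)) :=
    tendsto_const_nhds
  have h5 : Tendsto (fun a => (∫ θ in (0:ℝ)..a, f θ) + (Gfun y - Gfun a)) l
      (𝓝 (∫ θ in (0:ℝ)..y, f θ)) := by
    apply h4.congr'
    filter_upwards [self_mem_nhdsWithin] with a ha
    exact key a ha
  have := tendsto_nhds_unique h5 h3
  rw [this]
  ring


open MeasureTheory in
lemma endpoint_eq : (∫ θ in (0:ℝ)..(π/4), Real.log (Real.tan θ)) = Gfun (π/4) := by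
  have hpi := Real.pi_pos
  set l' := 𝓝[Ioo 0 (π/4)] (π/4 : ℝ) with hl'
  have hne : l'.NeBot := by
    rw [hl', ← mem_closure_iff_nhdsWithin_neBot, closure_Ioo (by positivity : (0:ℝ) ≠ π/4)]
    exact ⟨by linarith, le_refl _⟩
  have hIcc : IntegrableOn (fun θ => Real.log (Real.tan θ)) (uIcc 0 (π/4)) volume := by
    rw [uIcc_of_le (by linarith), integrableOn_Icc_iff_integrableOn_Ioc]
    exact integrableOn_logtan
  have hcont := intervalIntegral.continuousOn_primitive_interval hIcc
  have hL : Tendsto (fun y => ∫ θ in (0:ℝ)..y, Real.log (Real.tan θ)) l'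
      (𝓝 (∫ θ in (0:ℝ)..(π/4), Real.log (Real.tan θ))) := by
    have hc := (hcont (π/4) (by rw [uIcc_of_le (by linarith)]; exact ⟨by linarith, le_refl _⟩)).tendsto
    apply hc.mono_left
    rw [hl']
    apply nhdsWithin_mono
    rw [uIcc_of_le (by linarith)]
    exact Ioo_subset_Icc_self
  have hcos : Real.cos (π/4) ≠ 0 := by
    rw [Real.cos_pi_div_four]
    positivity
  have htan1 : Real.tan (π/4) ≠ 0 := by rw [Real.tan_pi_div_four]; norm_num
  have hGc : ContinuousAt Gfun (π/4) := by
    apply ContinuousAt.sub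
    · exact continuousAt_id.mul ((Real.continuousAt_log htan1).comp
        (Real.continuousAt_tan.mpr hcos))
    · exact (continuous_const.mul Sfun_continuous).continuousAt
  have hR : Tendsto Gfun l' (𝓝 (Gfun (π/4))) := hGc.tendsto.mono_left nhdsWithin_le_nhds
  have hR' : Tendsto (fun y => ∫ θ in (0:ℝ)..y, Real.log (Real.tan θ)) l' (𝓝 (Gfun (π/4))) := by
    apply hR.congr'
    filter_upwards [self_mem_nhdsWithin] with y hy
    exact (main_interior hy).symm
  exact tendsto_nhds_unique hL hR'

theorem stmt2 (x : ℝ) (hx0 : 0 ≤ x) (hx1 : x ≤ π / 4) :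
    (∫ θ in (0:ℝ)..x, Real.log (Real.tan θ)) =
      x * Real.log (Real.tan x) -
        (1 / 4) * ∑' k : ℕ,
          (2 * Real.sin (2 * x)) ^ (2 * k + 1) /
            ((2 * k + 1) ^ 2 * (Nat.choose (2 * k) k : ℝ)) := by
  have hpi := Real.pi_pos
  show (∫ θ in (0:ℝ)..x, Real.log (Real.tan θ)) = Gfun x
  rcases eq_or_lt_of_le hx0 with h0 | h0
  · rw [← h0, intervalIntegral.integral_same]
    unfold Gfun
    rw [Sfun_zero]
    simp [Real.tan_zero]
  rcases eq_or_lt_of_le hx1 with h4 | h4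
  · rw [h4]
    exact endpoint_eq
  · exact main_interior ⟨h0, h4⟩
end

section
/- For |t| < 1, the power series identity 2t·arcsin(t)/√(1-t²) = ∑_{k=1}^∞ (2t)^{2k} / (k·C(2k,k)) holds. -/
set_option maxHeartbeats 800000

open Real intervalIntegral

lemma beta_nat : ∀ (n m : ℕ), ∫ x in (0:ℝ)..1, x ^ m * (1 - x) ^ n
    = (m.factorial * n.factorial : ℝ) / (m + n + 1).factorial := by
  intro n
  induction n with
  | zero =>
    intro m; simp [integral_pow, Nat.factorial_succ]
    rw [eq_div_iff (by positivity)]; field_simp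
  | succ n IH =>
    intro m
    have hu : ∀ x ∈ Set.uIcc (0:ℝ) 1, HasDerivAt (fun x : ℝ => (1 - x) ^ (n+1))
        (-(((n:ℝ)+1) * (1 - x) ^ n)) x := by
      intro x _
      have h1 : HasDerivAt (fun x : ℝ => 1 - x) (-1) x := by
        exact (hasDerivAt_id x).const_sub 1
      have := h1.pow (n+1)
      refine this.congr_deriv ?_
      push_cast; ring
    have hv : ∀ x ∈ Set.uIcc (0:ℝ) 1, HasDerivAt (fun x : ℝ => x ^ (m+1) / ((m:ℝ)+1))
        (x ^ m) x := by
      intro x _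
      have := (hasDerivAt_pow (m+1) x).div_const ((m:ℝ)+1)
      refine this.congr_deriv ?_
      push_cast
      field_simp
    have hu' : IntervalIntegrable (fun x : ℝ => -(((n:ℝ)+1) * (1 - x) ^ n))
        MeasureTheory.volume 0 1 := (Continuous.intervalIntegrable (by continuity) 0 1)
    have hv' : IntervalIntegrable (fun x : ℝ => x ^ m) MeasureTheory.volume 0 1 :=
      (Continuous.intervalIntegrable (by continuity) 0 1)
    have parts := integral_mul_deriv_eq_deriv_mul hu hv hu' hv'
    have e1 : ∫ x in (0:ℝ)..1, x ^ m * (1 - x) ^ (n+1)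
        = ∫ x in (0:ℝ)..1, (1 - x) ^ (n+1) * x ^ m := by
      apply integral_congr; intro x _; ring
    have e2 : ∫ x in (0:ℝ)..1, -(((n:ℝ)+1) * (1 - x) ^ n) * (x ^ (m+1) / ((m:ℝ)+1))
        = (-(((n:ℝ)+1) / ((m:ℝ)+1))) * ∫ x in (0:ℝ)..1, x ^ (m+1) * (1 - x) ^ n := by
      rw [← integral_const_mul]
      apply integral_congr; intro x _; ring
    rw [e2] at parts
    rw [e1, parts, IH (m+1)]
    have hm : ((m:ℝ)+1) ≠ 0 := by positivity
    have h2 : ((m + (n+1) + 1).factorial : ℝ) ≠ 0 := by positivity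
    have hfac : ((m+1) + n + 1) = m + (n+1) + 1 := by omega
    rw [hfac]
    push_cast [Nat.factorial_succ]
    field_simp
    ring

lemma rat_int (t : ℝ) (ht : |t| < 1) :
    ∫ x in (0:ℝ)..1, 4*t^2*(1-x) / ((2*t*x - t)^2 + (1 - t^2))
      = 2 * t * arcsin t / Real.sqrt (1 - t^2) := by
  have ht1 : t^2 < 1 := by nlinarith [abs_nonneg t, sq_abs t, ht]
  have hs0 : (0:ℝ) < 1 - t^2 := by linarith
  set s := Real.sqrt (1 - t^2) with hs
  have hspos : 0 < s := Real.sqrt_pos.mpr hs0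
  have hs2 : s^2 = 1 - t^2 := Real.sq_sqrt hs0.le
  have hsne : s ≠ 0 := hspos.ne'
  have hD : ∀ x : ℝ, 0 < (2*t*x - t)^2 + (1 - t^2) := by
    intro x; positivity
  set G : ℝ → ℝ := fun x => -(1/2) * Real.log ((2*t*x - t)^2 + (1 - t^2))
      + (t/s) * arctan ((2*t*x - t)/s) with hG
  have hderiv : ∀ x ∈ Set.uIcc (0:ℝ) 1,
      HasDerivAt G (4*t^2*(1-x) / ((2*t*x - t)^2 + (1 - t^2))) x := by
    intro x _
    have hp : HasDerivAt (fun x : ℝ => 2*t*x - t) (2*t) x := by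
      exact (((hasDerivAt_id x).const_mul (2*t)).sub_const t).congr_deriv (mul_one _)
    have hDd : HasDerivAt (fun x : ℝ => (2*t*x - t)^2 + (1 - t^2))
        (2 * (2*t*x - t) * (2*t)) x := by
      have := (hp.pow 2).add (hasDerivAt_const x (1 - t^2))
      refine this.congr_deriv ?_; push_cast; ring
    have hlog := (hDd.log (hD x).ne')
    have harc := ((hp.div_const s).arctan).const_mul (t/s)
    have := ((hlog.const_mul (-(1/2)))).add harc
    refine this.congr_deriv ?_
    have hne := (hD x).ne'
    have h1 : 1 + ((2*t*x - t)/s)^2 = ((2*t*x - t)^2 + (1 - t^2))/s^2 := by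
      field_simp; rw [hs2]; ring
    rw [h1]
    field_simp
    ring
  have hcont : IntervalIntegrable (fun x : ℝ => 4*t^2*(1-x) / ((2*t*x - t)^2 + (1 - t^2)))
      MeasureTheory.volume 0 1 := by
    apply Continuous.intervalIntegrable
    exact (by continuity : Continuous fun x : ℝ => 4*t^2*(1-x)).div
      (by continuity) (fun x => (hD x).ne')
  rw [integral_eq_sub_of_hasDerivAt hderiv hcont]
  have e1 : (2*t*1 - t) = t := by ring
  have e0 : (2*t*0 - t) = -t := by ring
  simp only [hG, e1, e0]
  have harcsin : arcsin t = arctan (t/s) := by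
    rw [hs]; exact arcsin_eq_arctan ⟨by cases abs_lt.mp ht; linarith, by cases abs_lt.mp ht; linarith⟩
  have hlogeq : (-t)^2 + (1 - t^2) = t^2 + (1 - t^2) := by ring
  rw [hlogeq, neg_div, Real.arctan_neg, harcsin]
  field_simp
  ring

theorem stmt3 (t : ℝ) (ht : |t| < 1) :
    2 * t * Real.arcsin t / Real.sqrt (1 - t ^ 2) =
      ∑' k : ℕ, (2 * t) ^ (2 * (k + 1)) /
        ((k + 1) * (Nat.choose (2 * (k + 1)) (k + 1) : ℝ)) := by
  have ht1 : t^2 < 1 := by nlinarith [abs_nonneg t, sq_abs t, ht]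
  set F : ℕ → ℝ → ℝ := fun k x => (4*t^2)^(k+1) * (x^k * (1-x)^(k+1)) with hF
  -- coefficient identity
  have hchoose : ∀ k : ℕ, ((k:ℝ)+1) * (Nat.choose (2*(k+1)) (k+1) : ℝ)
      * ((k.factorial : ℝ) * ((k+1).factorial : ℝ)) = ((2*(k+1)).factorial : ℝ) := by
    intro k
    have h := Nat.choose_mul_factorial_mul_factorial
      (show k+1 ≤ 2*(k+1) by omega)
    have h2 : 2*(k+1) - (k+1) = k+1 := by omega
    rw [h2] at h
    have hr : ((Nat.choose (2*(k+1)) (k+1) : ℕ) : ℝ) * ((k+1).factorial : ℝ)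
        * ((k+1).factorial : ℝ) = ((2*(k+1)).factorial : ℝ) := by
      exact_mod_cast congrArg (Nat.cast : ℕ → ℝ) h
    push_cast [Nat.factorial_succ] at hr ⊢
    linear_combination hr
  have hchoosene : ∀ k : ℕ, (Nat.choose (2*(k+1)) (k+1) : ℝ) ≠ 0 := by
    intro k
    exact_mod_cast (Nat.choose_pos (show k+1 ≤ 2*(k+1) by omega)).ne'
  have hpos : ∀ k : ℕ, (0:ℝ) < ((k:ℝ)+1) * (Nat.choose (2*(k+1)) (k+1) : ℝ) := by
    intro k
    have h2 : (0:ℝ) < (Nat.choose (2*(k+1)) (k+1) : ℝ) := by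
      exact_mod_cast Nat.choose_pos (show k+1 ≤ 2*(k+1) by omega)
    positivity
  have hterm : ∀ k : ℕ, (2*t) ^ (2*(k+1)) / (((k:ℝ)+1) * (Nat.choose (2*(k+1)) (k+1) : ℝ))
      = ∫ x in (0:ℝ)..1, F k x := by
    intro k
    simp only [hF]
    rw [integral_const_mul, beta_nat (k+1) k]
    have hfe : (k + (k+1) + 1) = 2*(k+1) := by omega
    rw [hfe]
    have h4 : (2*t) ^ (2*(k+1)) = (4*t^2)^(k+1) := by
      rw [pow_mul, show (2*t)^2 = 4*t^2 by ring]
    rw [h4, div_eq_iff (hpos k).ne']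
    have hone : ((k.factorial : ℝ) * ((k+1).factorial : ℝ) / ((2*(k+1)).factorial : ℝ))
        * (((k:ℝ)+1) * (Nat.choose (2*(k+1)) (k+1) : ℝ)) = 1 := by
      rw [div_mul_eq_mul_div, div_eq_one_iff_eq (by positivity)]
      rw [← hchoose k]; ring
    rw [mul_assoc, hone, mul_one]
  -- pointwise sum
  have hpoint : ∀ x ∈ Set.Ioc (0:ℝ) 1, HasSum (fun k => F k x)
      (4*t^2*(1-x) / ((2*t*x - t)^2 + (1 - t^2))) := by
    intro x hx
    have hx01 : 0 < x ∧ x ≤ 1 := ⟨hx.1, hx.2⟩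
    set q : ℝ := 4*t^2*(x*(1-x)) with hq
    have hq0 : 0 ≤ q := by
      have : 0 ≤ x*(1-x) := mul_nonneg hx01.1.le (by linarith [hx01.2])
      positivity
    have hq1 : q < 1 := by
      have hxx : x*(1-x) ≤ 1/4 := by nlinarith [sq_nonneg (x - 1/2)]
      have : q ≤ t^2 := by nlinarith [sq_nonneg t]
      linarith
    have hgeo := (hasSum_geometric_of_lt_one hq0 hq1).mul_left (4*t^2*(1-x))
    have heq : (fun k : ℕ => 4*t^2*(1-x) * q^k) = fun k => F k x := by
      funext k
      simp only [hF, hq]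
      simp only [mul_pow, pow_succ]
      ring
    have hden : (2*t*x - t)^2 + (1 - t^2) = 1 - q := by
      simp only [hq]; ring
    have hval : 4*t^2*(1-x) * (1-q)⁻¹ = 4*t^2*(1-x) / ((2*t*x - t)^2 + (1 - t^2)) := by
      rw [div_eq_mul_inv, hden]
    rw [heq, hval] at hgeo
    exact hgeo
  -- integrability and summability
  have hFcont : ∀ k : ℕ, Continuous (F k) := by
    intro k; simp only [hF]; continuity
  set μ := MeasureTheory.volume.restrict (Set.Ioc (0:ℝ) 1) with hμ
  have hInt : ∀ k : ℕ, MeasureTheory.Integrable (F k) μ := by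
    intro k
    exact ((hFcont k).integrableOn_Ioc : MeasureTheory.IntegrableOn (F k) (Set.Ioc 0 1))
  have hFnonneg : ∀ k : ℕ, ∀ x ∈ Set.Ioc (0:ℝ) 1, 0 ≤ F k x := by
    intro k x hx
    have h1 : (0:ℝ) ≤ 1 - x := by linarith [hx.2]
    have h0 : (0:ℝ) ≤ x := hx.1.le
    simp only [hF]; positivity
  have hnormint : ∀ k : ℕ, ∫ x, ‖F k x‖ ∂μ = ∫ x in (0:ℝ)..1, F k x := by
    intro k
    rw [intervalIntegral.integral_of_le zero_le_one, hμ]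
    exact MeasureTheory.setIntegral_congr_fun measurableSet_Ioc
      (fun x hx => norm_of_nonneg (hFnonneg k x hx))
  have hbound : ∀ k : ℕ, (2*t) ^ (2*(k+1)) / (((k:ℝ)+1) * (Nat.choose (2*(k+1)) (k+1) : ℝ))
      ≤ 2 * t^2 * (t^2)^k := by
    intro k
    have hcb := Nat.four_pow_le_two_mul_self_mul_centralBinom (k+1) (Nat.succ_pos k)
    have hcbR : (4:ℝ)^(k+1) ≤ 2 * ((k:ℝ)+1) * (Nat.choose (2*(k+1)) (k+1) : ℝ) := by
      have : (Nat.centralBinom (k+1) : ℕ) = Nat.choose (2*(k+1)) (k+1) := rfl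
      exact_mod_cast hcb
    rw [div_le_iff₀ (hpos k)]
    have h4 : (2*t) ^ (2*(k+1)) = 4^(k+1) * (t^2)^(k+1) := by
      rw [pow_mul]; rw [show (2*t)^2 = 4 * t^2 by ring, mul_pow]
    rw [h4]
    calc 4^(k+1) * (t^2)^(k+1)
        ≤ (2 * ((k:ℝ)+1) * (Nat.choose (2*(k+1)) (k+1) : ℝ)) * (t^2)^(k+1) := by
          apply mul_le_mul_of_nonneg_right hcbR (by positivity)
      _ = 2 * t^2 * (t^2)^k * (((k:ℝ)+1) * (Nat.choose (2*(k+1)) (k+1) : ℝ)) := by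
          ring
  have hSum : Summable (fun k : ℕ => ∫ x, ‖F k x‖ ∂μ) := by
    have hg : Summable (fun k : ℕ => 2 * t^2 * (t^2)^k) :=
      (summable_geometric_of_lt_one (by positivity) ht1).mul_left (2 * t^2)
    refine Summable.of_nonneg_of_le
      (fun k => MeasureTheory.integral_nonneg (fun x => norm_nonneg _)) (fun k => ?_) hg
    rw [hnormint k, ← hterm k]
    exact hbound k
  have hswap := MeasureTheory.hasSum_integral_of_summable_integral_norm hInt hSum
  have htsumint : ∫ x, (∑' k, F k x) ∂μ
      = ∫ x in (0:ℝ)..1, 4*t^2*(1-x) / ((2*t*x - t)^2 + (1 - t^2)) := by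
    rw [intervalIntegral.integral_of_le zero_le_one, hμ]
    exact MeasureTheory.setIntegral_congr_fun measurableSet_Ioc
      (fun x hx => (hpoint x hx).tsum_eq)
  rw [htsumint, rat_int t ht] at hswap
  have := hswap.tsum_eq
  rw [← this]
  apply tsum_congr
  intro k
  rw [hterm k, intervalIntegral.integral_of_le zero_le_one, hμ]
end

section
/- Let m = 2n+1 be an odd positive integer and let x be a real number such that all the tangents involved are defined. Then tan(mx)/tan(x) = ∏_{j=1}^n tan(jπ/m + x)·tan(jπ/m - x). -/
open Real Finset
lemma prodA (m : ℕ) (hm : 0 < m) {ζ : ℂ} (hζ : IsPrimitiveRoot ζ m) (z : ℂ) :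
    ∏ k ∈ Finset.range m, (z - ζ ^ k) = z ^ m - 1 := by
  have h := Polynomial.X_pow_sub_one_eq_prod hm hζ
  have h2 := congrArg (Polynomial.eval z) h
  simp only [Polynomial.eval_sub, Polynomial.eval_pow, Polynomial.eval_X, Polynomial.eval_one,
    Polynomial.eval_prod, Polynomial.eval_C] at h2
  rw [h2]
  refine Finset.prod_nbij (fun i => ζ ^ i) ?_ ?_ ?_ ?_
  · intro i hi
    exact (Polynomial.mem_nthRootsFinset hm _).2 (by rw [← pow_mul, mul_comm, pow_mul, hζ.pow_eq_one, one_pow])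
  · intro i hi j hj hij
    exact hζ.pow_inj (Finset.mem_coe.1 hi |> Finset.mem_range.1) (Finset.mem_coe.1 hj |> Finset.mem_range.1) hij
  · intro μ hμ
    have hne : NeZero m := ⟨hm.ne'⟩
    have : μ ^ m = 1 := (Polynomial.mem_nthRootsFinset hm _).1 (Finset.mem_coe.1 hμ)
    obtain ⟨i, hi, rfl⟩ := hζ.eq_pow_of_pow_eq_one this
    exact ⟨i, Finset.mem_coe.2 (Finset.mem_range.2 hi), rfl⟩
  · intros; rfl

lemma prodB (n : ℕ) (x : ℂ) :
    ∏ k ∈ Finset.range (2*n+1), Complex.sin (x + k * ↑π / ((2*n+1 : ℕ) : ℂ)) =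
      Complex.sin (((2*n+1 : ℕ) : ℂ) * x) / 4^n := by
  set m : ℕ := 2*n+1 with hmdef
  have hmpos : (0:ℕ) < m := by omega
  have hm0 : (m:ℂ) ≠ 0 := Nat.cast_ne_zero.2 (by omega)
  set ζ : ℂ := Complex.exp (2 * ↑π * Complex.I / m) with hζdef
  have hζ : IsPrimitiveRoot ζ m := Complex.isPrimitiveRoot_exp m (by omega)
  have hζ0 : ζ ≠ 0 := Complex.exp_ne_zero _
  set ξ : ℂ := ζ⁻¹ with hξdef
  have hξ : IsPrimitiveRoot ξ m := hζ.inv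
  have hξζ : ζ * ξ = 1 := mul_inv_cancel₀ hζ0
  set z : ℂ := Complex.exp (2 * x * Complex.I) with hzdef
  have h2I : (2 : ℂ) * Complex.I ≠ 0 := by simp [Complex.I_ne_zero]
  have sin_eq : ∀ w : ℂ, Complex.sin w =
      (Complex.exp (w * Complex.I) - Complex.exp (-(w * Complex.I))) / (2 * Complex.I) := by
    intro w
    rw [eq_div_iff h2I, Complex.sin, neg_mul]
    linear_combination (Complex.exp (-(w*Complex.I)) - Complex.exp (w*Complex.I)) * Complex.I_sq
  have key : ∀ k ∈ Finset.range m, Complex.sin (x + k * ↑π / m) =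
      Complex.exp (-((x + k * ↑π / m) * Complex.I)) * ζ ^ k * (z - ξ ^ k) / (2 * Complex.I) := by
    intro k _
    rw [sin_eq]
    have hzk : Complex.exp ((x + k * ↑π / m) * Complex.I) =
        Complex.exp (-((x + k * ↑π / m) * Complex.I)) * (z * ζ ^ k) := by
      rw [hzdef, hζdef, ← Complex.exp_nat_mul, ← Complex.exp_add, ← Complex.exp_add]
      congr 1
      field_simp
      ring
    have hcan : ζ ^ k * ξ ^ k = 1 := by rw [← mul_pow, hξζ, one_pow]
    rw [hzk]
    congr 1
    linear_combination (Complex.exp (-((x + (k:ℂ) * ↑π / (m:ℂ)) * Complex.I))) * hcan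
  rw [Finset.prod_congr rfl key]
  simp only [Finset.prod_div_distrib, Finset.prod_mul_distrib, Finset.prod_const,
    Finset.card_range]
  have hsum : (∑ k ∈ Finset.range m, k) = m * n := by
    rw [Finset.sum_range_id, hmdef, Nat.add_sub_cancel,
      show (2*n+1)*(2*n) = (2*n+1)*n*2 by ring, Nat.mul_div_cancel _ two_pos]
  have hsum' : ∑ k ∈ Finset.range m, (x + (k:ℂ) * ↑π / m) = m * x + n * ↑π := by
    rw [Finset.sum_add_distrib, Finset.sum_const, Finset.card_range, nsmul_eq_mul]
    congr 1
    have h5 : ∑ k ∈ Finset.range m, ((k:ℂ) * ↑π / m) = ((∑ k ∈ Finset.range m, k : ℕ) : ℂ) * ↑π / m := by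
      rw [← Finset.sum_div, ← Finset.sum_mul, Nat.cast_sum]
    rw [h5, hsum]
    have hm0' : (2*(n:ℂ)+1) ≠ 0 := by
      have h9 : ((2*n+1 : ℕ):ℂ) ≠ 0 := Nat.cast_ne_zero.2 (by omega)
      push_cast at h9
      exact h9
    push_cast
    rw [show (m:ℂ) * ↑n * ↑π / ↑m = ↑n * ↑π * ((m:ℂ) / m) by ring,
      div_self hm0, mul_one]
  have h1 : ∏ k ∈ Finset.range m, Complex.exp (-((x + k * ↑π / m) * Complex.I)) =
      Complex.exp (-((m * x + n * ↑π) * Complex.I)) := by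
    rw [← Complex.exp_sum]
    congr 1
    simp only [← neg_mul]
    rw [← Finset.sum_mul, Finset.sum_neg_distrib, hsum', neg_mul]
  have h2 : ∏ k ∈ Finset.range m, ζ ^ k = 1 := by
    rw [Finset.prod_pow_eq_pow_sum, hsum, pow_mul, hζ.pow_eq_one, one_pow]
  have h3 : ∏ k ∈ Finset.range m, (z - ξ ^ k) = z ^ m - 1 := prodA m hmpos hξ z
  rw [h1, h2, h3]
  set E : ℂ := Complex.exp (↑m * x * Complex.I) with hEdef
  have hE0 : E ≠ 0 := Complex.exp_ne_zero _
  have hzm : z ^ m = E ^ 2 := by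
    rw [hzdef, hEdef, ← Complex.exp_nat_mul, ← Complex.exp_nat_mul]
    congr 1
    push_cast
    ring
  have hneg : Complex.exp (-((m * x + n * ↑π) * Complex.I)) = E⁻¹ * (-1)^n := by
    have hm1 : ((-1 : ℂ)) ^ n = Complex.exp (n * (-(↑π * Complex.I))) := by
      rw [Complex.exp_nat_mul, Complex.exp_neg, Complex.exp_pi_mul_I]
      norm_num
    rw [hm1, hEdef, ← Complex.exp_neg, ← Complex.exp_add]
    congr 1
    push_cast
    ring
  have hsinm : Complex.sin (↑m * x) = (E - E⁻¹) / (2 * Complex.I) := by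
    rw [sin_eq, hEdef, Complex.exp_neg]
  have hpm : (2 * Complex.I) ^ m = ((-1:ℂ)^n * 4^n) * (2 * Complex.I) := by
    rw [hmdef, pow_succ, pow_mul]
    norm_num [mul_pow, Complex.I_sq]
    rw [show (-4:ℂ) = (-1)*4 by norm_num, mul_pow]
  rw [hzm, hneg, hsinm]
  rw [show (2:ℂ)^m * Complex.I^m = (-1)^n * 4^n * (2*Complex.I) by rw [← mul_pow]; exact hpm]
  have hn1 : ((-1:ℂ))^n ≠ 0 := pow_ne_zero _ (by norm_num)
  have h4n : ((4:ℂ))^n ≠ 0 := pow_ne_zero _ (by norm_num)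
  have hI0 : Complex.I ≠ 0 := Complex.I_ne_zero
  field_simp

lemma prodB_real (n : ℕ) (x : ℝ) :
    ∏ k ∈ Finset.range (2*n+1), Real.sin (x + k * π / (2*(n:ℝ)+1)) =
      Real.sin ((2*(n:ℝ)+1) * x) / 4^n := by
  have h := prodB n (x : ℂ)
  have h2 : ((∏ k ∈ Finset.range (2*n+1), Real.sin (x + k * π / (2*(n:ℝ)+1)) : ℝ) : ℂ) =
      ((Real.sin ((2*(n:ℝ)+1) * x) / 4^n : ℝ) : ℂ) := by
    push_cast
    convert h using 2 with k hk
    · push_cast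
      norm_num
    · push_cast
      norm_num
  exact_mod_cast h2

lemma sinS (n : ℕ) (x : ℝ) :
    Real.sin ((2*(n:ℝ)+1) * x) = 4^n * Real.sin x *
      ∏ j ∈ Finset.Icc 1 n,
        (Real.sin (j*π/(2*(n:ℝ)+1) + x) * Real.sin (j*π/(2*(n:ℝ)+1) - x)) := by
  have h := prodB_real n x
  set m : ℝ := 2*(n:ℝ)+1 with hmdef
  have hsplit : Finset.range (2*n+1) = insert 0 (Finset.Icc 1 (2*n)) := by
    ext k; simp only [Finset.mem_range, Finset.mem_insert, Finset.mem_Icc]; omega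
  rw [hsplit, Finset.prod_insert (by simp)] at h
  have hsplit2 : Finset.Icc 1 (2*n) = Finset.Icc 1 n ∪ Finset.Icc (n+1) (2*n) := by
    ext k; simp only [Finset.mem_Icc, Finset.mem_union]; omega
  have hdisj : Disjoint (Finset.Icc 1 n) (Finset.Icc (n+1) (2*n)) := by
    rw [Finset.disjoint_left]; intro a ha hb
    simp only [Finset.mem_Icc] at ha hb; omega
  rw [hsplit2, Finset.prod_union hdisj] at h
  have hre : ∏ k ∈ Finset.Icc (n+1) (2*n), Real.sin (x + k * π / m) =
      ∏ j ∈ Finset.Icc 1 n, Real.sin (j * π / m - x) := by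
    refine Finset.prod_nbij' (fun k => 2*n+1-k) (fun j => 2*n+1-j) ?_ ?_ ?_ ?_ ?_
    · intro k hk; simp only [Finset.mem_Icc] at hk ⊢; omega
    · intro j hj; simp only [Finset.mem_Icc] at hj ⊢; omega
    · intro k hk; simp only [Finset.mem_Icc] at hk; omega
    · intro j hj; simp only [Finset.mem_Icc] at hj; omega
    · intro k hk
      simp only [Finset.mem_Icc] at hk
      have hcast : ((2*n+1-k : ℕ) : ℝ) = 2*(n:ℝ)+1 - k := by
        have : k ≤ 2*n+1 := by omega
        push_cast [this]
        ring
      rw [hcast]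
      have harg : (2*(n:ℝ)+1 - k) * π / m - x = π - (x + k * π / m) := by
        have hm0 : m ≠ 0 := by rw [hmdef]; positivity
        field_simp [hmdef]
        ring
      rw [harg, Real.sin_pi_sub]
  rw [hre] at h
  have hcomm : ∏ j ∈ Finset.Icc 1 n, Real.sin (x + j * π / m) =
      ∏ j ∈ Finset.Icc 1 n, Real.sin (j * π / m + x) := by
    apply Finset.prod_congr rfl; intro j _; rw [add_comm]
  rw [hcomm] at h
  rw [Finset.prod_mul_distrib]
  simp only [Nat.cast_zero, zero_mul, zero_div, add_zero] at h
  have h4 : (0:ℝ) < 4^n := by positivity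
  rw [eq_div_iff (ne_of_gt h4)] at h
  linarith [h]

lemma cosS (n : ℕ) (x : ℝ) :
    Real.cos ((2*(n:ℝ)+1) * x) = 4^n * Real.cos x *
      ∏ j ∈ Finset.Icc 1 n,
        (Real.cos (j*π/(2*(n:ℝ)+1) + x) * Real.cos (j*π/(2*(n:ℝ)+1) - x)) := by
  have h := sinS n (x + π/2)
  set m : ℝ := 2*(n:ℝ)+1 with hmdef
  have e1 : m * (x + π/2) = (m*x + π/2) + n*π := by rw [hmdef]; push_cast; ring
  rw [e1, Real.sin_add_nat_mul_pi, Real.sin_add_pi_div_two] at h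
  have e3 : ∀ j ∈ Finset.Icc 1 n,
      Real.sin ((j:ℝ)*π/m + (x+π/2)) * Real.sin ((j:ℝ)*π/m - (x+π/2)) =
      (-1) * (Real.cos ((j:ℝ)*π/m + x) * Real.cos ((j:ℝ)*π/m - x)) := by
    intro j _
    have a1 : (j:ℝ)*π/m + (x+π/2) = ((j:ℝ)*π/m + x) + π/2 := by ring
    have a2 : (j:ℝ)*π/m - (x+π/2) = ((j:ℝ)*π/m - x) - π/2 := by ring
    rw [a1, a2, Real.sin_add_pi_div_two, Real.sin_sub_pi_div_two]
    ring
  rw [Finset.prod_congr rfl e3, Finset.prod_mul_distrib, Finset.prod_const,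
    Nat.card_Icc, Nat.add_sub_cancel] at h
  have h' : (-1:ℝ)^n * Real.cos (m * x) =
      (-1:ℝ)^n * (4^n * Real.cos x *
        ∏ j ∈ Finset.Icc 1 n, (Real.cos ((j:ℝ)*π/m + x) * Real.cos ((j:ℝ)*π/m - x))) := by
    rw [Real.sin_add_pi_div_two] at h
    linear_combination h
  exact mul_left_cancel₀ (pow_ne_zero _ (by norm_num : (-1:ℝ) ≠ 0)) h'

theorem stmt6 (n : ℕ) (x : ℝ)
    (hx : Real.cos x ≠ 0) (hmx : Real.cos ((2 * n + 1) * x) ≠ 0)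
    (htx : Real.tan x ≠ 0)
    (hj : ∀ j ∈ Finset.Icc 1 n,
      Real.cos (j * π / (2 * n + 1) + x) ≠ 0 ∧
      Real.cos (j * π / (2 * n + 1) - x) ≠ 0) :
    Real.tan ((2 * n + 1) * x) / Real.tan x =
      ∏ j ∈ Finset.Icc 1 n,
        Real.tan (j * π / (2 * n + 1) + x) *
          Real.tan (j * π / (2 * n + 1) - x) := by
  have hsx : Real.sin x ≠ 0 := by
    intro h0; apply htx; rw [Real.tan_eq_sin_div_cos, h0, zero_div]
  have hs := sinS n x
  have hc := cosS n x
  have hPc : ∏ j ∈ Finset.Icc 1 n,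
      (Real.cos ((j:ℝ)*π/(2*(n:ℝ)+1) + x) * Real.cos ((j:ℝ)*π/(2*(n:ℝ)+1) - x)) ≠ 0 :=
    Finset.prod_ne_zero_iff.2 fun i hi => mul_ne_zero (hj i hi).1 (hj i hi).2
  have h4 : (4:ℝ)^n ≠ 0 := by positivity
  rw [Real.tan_eq_sin_div_cos, Real.tan_eq_sin_div_cos]
  have hRHS : ∏ j ∈ Finset.Icc 1 n,
      Real.tan ((j:ℝ) * π / (2 * (n:ℝ) + 1) + x) * Real.tan ((j:ℝ) * π / (2 * (n:ℝ) + 1) - x) =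
      (∏ j ∈ Finset.Icc 1 n,
        (Real.sin ((j:ℝ)*π/(2*(n:ℝ)+1) + x) * Real.sin ((j:ℝ)*π/(2*(n:ℝ)+1) - x))) /
      (∏ j ∈ Finset.Icc 1 n,
        (Real.cos ((j:ℝ)*π/(2*(n:ℝ)+1) + x) * Real.cos ((j:ℝ)*π/(2*(n:ℝ)+1) - x))) := by
    rw [← Finset.prod_div_distrib]
    refine Finset.prod_congr rfl fun i _ => ?_
    rw [Real.tan_eq_sin_div_cos, Real.tan_eq_sin_div_cos, div_mul_div_comm]
  rw [hRHS, hs, hc]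
  rw [hc] at hmx
  set Ps := ∏ j ∈ Finset.Icc 1 n,
    (Real.sin ((j:ℝ)*π/(2*(n:ℝ)+1) + x) * Real.sin ((j:ℝ)*π/(2*(n:ℝ)+1) - x)) with hPsdef
  set Pc := ∏ j ∈ Finset.Icc 1 n,
    (Real.cos ((j:ℝ)*π/(2*(n:ℝ)+1) + x) * Real.cos ((j:ℝ)*π/(2*(n:ℝ)+1) - x)) with hPcdef
  field_simp
end

section
/- Define T(r) = ∫_0^{rπ} log(tan θ) dθ. Let m = 2n+1 be an odd positive integer and suppose 0 ≤ r ≤ 1/(2m). Then T(mr) = m·∑_{j=0}^n T(j/m + r) - m·∑_{j=1}^n T(j/m - r). -/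
open Real

noncomputable def T (r : ℝ) : ℝ := ∫ θ in (0:ℝ)..(r * π), Real.log (Real.tan θ)

open Finset Complex in
lemma prod_root (m : ℕ) (hm : 0 < m) (y : ℂ) :
    ∏ k ∈ range m, (y - Complex.exp (2 * ↑π * I / m) ^ k) = y ^ m - 1 := by
  have hζ : IsPrimitiveRoot (Complex.exp (2 * ↑π * I / m)) m :=
    Complex.isPrimitiveRoot_exp m hm.ne'
  have h := X_pow_sub_C_eq_prod hζ hm (one_pow m)
  have h2 := congrArg (Polynomial.eval y) h
  simpa [Polynomial.eval_prod] using h2.symm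

open Finset Complex in
lemma prod_one_sub (m : ℕ) (hm : 0 < m) (x : ℂ) (hx : x ≠ 0) :
    ∏ k ∈ range m, (1 - x * Complex.exp (2 * ↑π * I / m) ^ k) = 1 - x ^ m := by
  have h1 : ∀ k ∈ range m, (1 - x * Complex.exp (2 * ↑π * I / m) ^ k)
      = x * (x⁻¹ - Complex.exp (2 * ↑π * I / m) ^ k) := by
    intro k _
    field_simp
  rw [Finset.prod_congr rfl h1, Finset.prod_mul_distrib, Finset.prod_const, card_range,
    prod_root m hm]
  field_simp
  rw [one_div, inv_pow, mul_sub, mul_inv_cancel₀ (pow_ne_zero _ hx), mul_one]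

open Finset Complex in
lemma csin_prod (n : ℕ) (z : ℂ) :
    Complex.sin ((2 * n + 1) * z) =
      2 ^ (2 * n) * ∏ k ∈ range (2 * n + 1), Complex.sin (z + k * ↑π / (2 * n + 1)) := by
  have hcast : (2 * (n:ℂ) + 1) = ((2 * n + 1 : ℕ) : ℂ) := by push_cast; ring
  rw [hcast]
  set m : ℕ := 2 * n + 1 with hm
  have hm0 : (0:ℕ) < m := Nat.succ_pos _
  have hmC : (m : ℂ) ≠ 0 := Nat.cast_ne_zero.mpr hm0.ne'
  set ζ : ℂ := Complex.exp (2 * ↑π * I / m) with hζdef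
  set x : ℂ := Complex.exp (2 * z * I) with hxdef
  have hx : x ≠ 0 := Complex.exp_ne_zero _
  -- per-factor identity
  have hfac : ∀ k ∈ range m, Complex.sin (z + k * ↑π / m)
      = Complex.exp (-(z + k * ↑π / m) * I) * I / 2 * (1 - x * ζ ^ k) := by
    intro k _
    have e1 : Complex.exp (2 * (z + k * ↑π / m) * I) = x * ζ ^ k := by
      rw [hxdef, hζdef, ← Complex.exp_nat_mul, ← Complex.exp_add]
      congr 1
      field_simp
    have e2 : Complex.exp (-(z + k * ↑π / m) * I) * (1 - x * ζ ^ k)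
        = Complex.exp (-(z + k * ↑π / m) * I) - Complex.exp ((z + k * ↑π / m) * I) := by
      rw [← e1, mul_sub, mul_one, ← Complex.exp_add]
      congr 2
      ring
    have h3 := Complex.two_sin (z + k * ↑π / m)
    linear_combination h3 / 2 - I / 2 * e2
  rw [Finset.prod_congr rfl hfac, Finset.prod_mul_distrib, Finset.prod_div_distrib,
    Finset.prod_mul_distrib, Finset.prod_const, Finset.prod_const, card_range,
    prod_one_sub m hm0 x hx, ← Complex.exp_sum]
  have hsumnat : (∑ k ∈ range m, k) = n * m := by
    have h := Finset.sum_range_id_mul_two m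
    have h2 : m - 1 = 2 * n := by simp [hm]
    rw [h2] at h
    apply Nat.eq_of_mul_eq_mul_right (show 0 < 2 by norm_num)
    rw [h, hm]
    ring
  have hsum : (∑ k ∈ range m, (-(z + k * ↑π / m) * I)) = -((m : ℂ) * z * I) + n * (-(↑π * I)) := by
    have : (∑ k ∈ range m, ((k : ℂ))) = (n : ℂ) * m := by
      rw [← Nat.cast_sum]
      exact_mod_cast congrArg (Nat.cast : ℕ → ℂ) hsumnat
    rw [Finset.sum_congr rfl (fun k _ => by ring_nf : ∀ k ∈ range m,
      (-(z + k * ↑π / m) * I) = -(z * I) + -(↑π / m * I) * (k : ℂ))]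
    rw [Finset.sum_add_distrib, Finset.sum_const, card_range, ← Finset.mul_sum, this]
    field_simp
    ring
  rw [hsum, Complex.exp_add, Complex.exp_nat_mul]
  simp only [Complex.exp_neg, Complex.exp_pi_mul_I]
  have hxm : x ^ m = Complex.exp ((m:ℂ) * z * I) ^ 2 := by
    rw [hxdef, ← Complex.exp_nat_mul, ← Complex.exp_nat_mul]
    congr 1
    push_cast
    ring
  rw [hxm]
  set W : ℂ := Complex.exp ((m:ℂ) * z * I) with hWdef
  have hW : W ≠ 0 := Complex.exp_ne_zero _
  have hWe : Complex.exp (-((m:ℂ) * z) * I) = W⁻¹ := by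
    rw [hWdef, ← Complex.exp_neg]
    congr 1
    ring
  have hs := Complex.two_sin ((m:ℂ) * z)
  rw [hWe] at hs
  have hsin : Complex.sin ((m:ℂ) * z) = (W⁻¹ - W) * I / 2 := by
    linear_combination hs / 2
  have hIm : (I:ℂ) ^ m = (-1) ^ n * I := by
    rw [hm, pow_succ, pow_mul, Complex.I_sq]
  have hinv : ((-1:ℂ))⁻¹ ^ n = (-1) ^ n := by norm_num
  have h4 : ((-1:ℂ)) ^ n * (-1) ^ n = 1 := by
    rw [← mul_pow]; norm_num
  have h5 : ((-1:ℂ)) ^ n * ((-1) ^ n * I) = I := by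
    rw [← mul_assoc, h4, one_mul]
  rw [hIm, hinv, mul_assoc W⁻¹, h5, hsin]
  have h20 : (2:ℂ) ^ m ≠ 0 := pow_ne_zero _ two_ne_zero
  field_simp
  rw [hm, pow_succ]
  ring

lemma rsin_prod (n : ℕ) (θ : ℝ) :
    Real.sin ((2 * n + 1) * θ) =
      2 ^ (2 * n) * ∏ k ∈ Finset.range (2 * n + 1), Real.sin (θ + k * π / (2 * n + 1)) := by
  have h := csin_prod n (θ : ℂ)
  apply Complex.ofReal_injective
  push_cast [Complex.ofReal_sin]
  exact h

open MeasureTheory intervalIntegral in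
lemma integrableOn_log_Ioc01 : MeasureTheory.IntegrableOn Real.log (Set.Ioc 0 1) := by
  apply MeasureTheory.integrableOn_Ioc_of_intervalIntegral_norm_bounded_left
    (a := fun i : ℕ => 1 / (i + 1)) (l := Filter.atTop) (I := 1)
  · intro i
    have hpos : (0:ℝ) < 1 / (i + 1) := by positivity
    exact (intervalIntegrable_log (by
      rw [Set.mem_uIcc]
      push_neg
      constructor <;> intro h <;> [skip; linarith]
      exact absurd h (not_le.mpr hpos))).1
  · exact tendsto_one_div_add_atTop_nhds_zero_nat
  · filter_upwards with i
    have hpos : (0:ℝ) < 1 / (i + 1) := by positivity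
    have hle : (1:ℝ) / (i + 1) ≤ 1 := by
      rw [div_le_one (by positivity)]
      linarith
    set a : ℝ := 1 / (i + 1) with ha
    have h1 : ∫ x in Set.Ioc a 1, ‖Real.log x‖ = ∫ x in a..(1:ℝ), ‖Real.log x‖ := by
      rw [intervalIntegral.integral_of_le hle]
    rw [h1]
    have h2 : ∫ x in a..(1:ℝ), ‖Real.log x‖ = ∫ x in a..(1:ℝ), -Real.log x := by
      apply intervalIntegral.integral_congr
      intro x hx
      rw [Set.uIcc_of_le hle] at hx
      have hx0 : 0 < x := lt_of_lt_of_le hpos hx.1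
      have hlx : Real.log x ≤ 0 := Real.log_nonpos (le_of_lt hx0) hx.2
      simp [Real.norm_eq_abs, abs_of_nonpos hlx]
    rw [h2, intervalIntegral.integral_neg, integral_log]
    have hla : Real.log a ≤ 0 := Real.log_nonpos (le_of_lt hpos) hle
    have : a * Real.log a ≤ 0 := mul_nonpos_of_nonneg_of_nonpos (le_of_lt hpos) hla
    simp only [Real.log_one]
    nlinarith

open MeasureTheory in
lemma integrableOn_log_sin_Ioc01 :
    MeasureTheory.IntegrableOn (fun x => Real.log (Real.sin x)) (Set.Ioc 0 1) := by
  have hg : MeasureTheory.IntegrableOn (fun x => Real.log x - Real.log π) (Set.Ioc 0 1) := by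
    apply MeasureTheory.Integrable.sub integrableOn_log_Ioc01
    exact (MeasureTheory.integrableOn_const_iff).mpr (Or.inr (by simp))
  apply MeasureTheory.Integrable.mono hg
  · exact (Real.measurable_log.comp Real.continuous_sin.measurable).aestronglyMeasurable
  · rw [MeasureTheory.ae_restrict_iff' measurableSet_Ioc]
    filter_upwards with x hx
    have hx0 : 0 < x := hx.1
    have hx1 : x ≤ 1 := hx.2
    have hxpi2 : x ≤ π / 2 := le_trans hx1 (by linarith [Real.pi_gt_three])
    have hsinge : x / π ≤ Real.sin x := by
      have h2 := Real.mul_le_sin (le_of_lt hx0) hxpi2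
      have hpg : (0:ℝ) < π := Real.pi_pos
      rw [div_mul_eq_mul_div, div_le_iff₀ hpg] at h2
      rw [div_le_iff₀ hpg]
      linarith
    have hsinpos : 0 < Real.sin x := Real.sin_pos_of_pos_of_lt_pi hx0 (by linarith [Real.pi_gt_three])
    have hlog1 : Real.log x - Real.log π ≤ Real.log (Real.sin x) := by
      rw [← Real.log_div (ne_of_gt hx0) (ne_of_gt Real.pi_pos)]
      exact Real.log_le_log (by positivity) hsinge
    have hlogsin_le : Real.log (Real.sin x) ≤ 0 := Real.log_nonpos (le_of_lt hsinpos) (Real.sin_le_one x)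
    have hlogx_le : Real.log x - Real.log π ≤ 0 := by
      have : Real.log x ≤ 0 := Real.log_nonpos (le_of_lt hx0) hx1
      have : 0 ≤ Real.log π := Real.log_nonneg (by linarith [Real.pi_gt_three])
      linarith
    rw [Real.norm_eq_abs, Real.norm_eq_abs, abs_of_nonpos hlogsin_le, abs_of_nonpos hlogx_le]
    linarith

open MeasureTheory in
lemma intervalIntegrable_log_sin' :
    IntervalIntegrable (fun x => Real.log (Real.sin x)) MeasureTheory.volume 0 (π / 2) := by
  rw [intervalIntegrable_iff_integrableOn_Ioc_of_le (by positivity)]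
  have h1 : (1:ℝ) ≤ π / 2 := by linarith [Real.pi_gt_three]
  have hcont : MeasureTheory.IntegrableOn (fun x => Real.log (Real.sin x)) (Set.Ioc 1 (π/2)) := by
    apply (ContinuousOn.integrableOn_compact isCompact_Icc _).mono_set Set.Ioc_subset_Icc_self
    apply ContinuousOn.log (Real.continuous_sin.continuousOn)
    intro x hx
    have : 0 < Real.sin x := Real.sin_pos_of_pos_of_lt_pi (by linarith [hx.1])
      (by linarith [hx.2, Real.pi_pos])
    exact ne_of_gt this
  have := integrableOn_log_sin_Ioc01.union hcont
  apply this.mono_set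
  rw [Set.Ioc_union_Ioc_eq_Ioc (by norm_num) h1]

open MeasureTheory in
lemma intervalIntegrable_log_tan :
    IntervalIntegrable (fun x => Real.log (Real.tan x)) MeasureTheory.volume 0 (π / 2) := by
  have h1 := intervalIntegrable_log_sin'
  have h2 : IntervalIntegrable (fun x => Real.log (Real.sin (π / 2 - x)))
      MeasureTheory.volume 0 (π / 2) := by
    have := h1.comp_sub_left (π / 2)
    simpa using this.symm
  apply (h1.sub h2).congr_ae
  rw [Filter.EventuallyEq, MeasureTheory.ae_restrict_iff' measurableSet_uIoc]
  filter_upwards with x hx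
  rw [Set.uIoc_of_le (by positivity : (0:ℝ) ≤ π/2)] at hx
  have hx0 : 0 < x := hx.1
  have hx2 : x ≤ π / 2 := hx.2
  rcases eq_or_lt_of_le hx2 with heq | hlt
  · rw [heq]
    simp [Real.tan_pi_div_two, Real.log_zero]
  · have hsin : 0 < Real.sin x := Real.sin_pos_of_pos_of_lt_pi hx0 (by linarith [Real.pi_pos])
    have hcos : 0 < Real.cos x := Real.cos_pos_of_mem_Ioo ⟨by linarith [Real.pi_pos], hlt⟩
    rw [Real.sin_pi_div_two_sub, Real.tan_eq_sin_div_cos,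
      Real.log_div (ne_of_gt hsin) (ne_of_gt hcos)]


lemma sum_split (n : ℕ) (f : ℕ → ℝ) :
    ∑ k ∈ Finset.range (2 * n + 1), f k
      = ∑ k ∈ Finset.range (n + 1), f k + ∑ i ∈ Finset.range n, f (n + 1 + i) := by
  rw [← Finset.sum_range_add_sum_Ico f (by omega : n + 1 ≤ 2 * n + 1),
    Finset.sum_Ico_eq_sum_range]
  have h : 2 * n + 1 - (n + 1) = n := by omega
  rw [h]

lemma sum_icc (n : ℕ) (g : ℕ → ℝ) :
    ∑ j ∈ Finset.Icc 1 n, g j = ∑ i ∈ Finset.range n, g (1 + i) := by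
  rw [← Finset.Ico_add_one_right_eq_Icc, Finset.sum_Ico_eq_sum_range]
  have h : n + 1 - 1 = n := by omega
  rw [h]

lemma logtan_sum (n : ℕ) (u : ℝ) (hu0 : 0 < u) (hu1 : u < π / (2 * (2 * n + 1))) :
    Real.log (Real.tan ((2 * n + 1) * u)) =
      (∑ j ∈ Finset.range (n + 1), Real.log (Real.tan (u + j * π / (2 * n + 1)))) +
      ∑ j ∈ Finset.Icc 1 n, Real.log (Real.tan (j * π / (2 * n + 1) - u)) := by
  have hπ := Real.pi_pos
  have hM : (0:ℝ) < 2 * n + 1 := by positivity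
  have hM0 : (2 * (n:ℝ) + 1) ≠ 0 := ne_of_gt hM
  set c : ℝ := π / (2 * n + 1) with hc
  have hc0 : 0 < c := by positivity
  have hMc : (2 * (n:ℝ) + 1) * c = π := by rw [hc]; field_simp
  have hu1' : u < c / 2 := by
    have h : c / 2 = π / (2 * (2 * (n:ℝ) + 1)) := by
      rw [hc, div_div]
      ring
    rw [h]
    exact hu1
  -- angle facts
  have hang : ∀ k : ℕ, k < 2 * n + 1 → 0 < Real.sin (u + k * c) := by
    intro k hk
    apply Real.sin_pos_of_pos_of_lt_pi
    · positivity
    · have hk' : (k:ℝ) ≤ 2 * n := by exact_mod_cast Nat.lt_succ_iff.mp hk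
      nlinarith
  have hang2 : ∀ k : ℕ, k < 2 * n + 1 → 0 < Real.sin (c / 2 - u + k * c) := by
    intro k hk
    apply Real.sin_pos_of_pos_of_lt_pi
    · have : (0:ℝ) ≤ k * c := by positivity
      nlinarith
    · have hk' : (k:ℝ) ≤ 2 * n := by exact_mod_cast Nat.lt_succ_iff.mp hk
      nlinarith
  -- log sin (M u)
  have key1 : Real.log (Real.sin ((2 * n + 1) * u)) =
      (2 * n) * Real.log 2 + ∑ k ∈ Finset.range (2 * n + 1), Real.log (Real.sin (u + k * c)) := by
    rw [rsin_prod n u]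
    rw [Real.log_mul (by positivity) (by
      apply ne_of_gt
      apply Finset.prod_pos
      intro k hk
      have := hang k (Finset.mem_range.mp hk)
      convert this using 3
      · rfl
      rw [hc]; ring)]
    rw [Real.log_pow, Real.log_prod (fun k hk => by
      have := hang k (Finset.mem_range.mp hk)
      apply ne_of_gt
      convert this using 3
      · rfl
      rw [hc]; ring)]
    push_cast
    congr 1
    apply Finset.sum_congr rfl
    intro k _
    congr 2
    rw [hc]; ring
  -- log cos (M u)
  have key2 : Real.log (Real.cos ((2 * n + 1) * u)) =
      (2 * n) * Real.log 2 + ∑ k ∈ Finset.range (2 * n + 1),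
        Real.log (Real.sin (c / 2 - u + k * c)) := by
    have hcos : Real.cos ((2 * n + 1) * u) = Real.sin ((2 * n + 1) * (c / 2 - u)) := by
      rw [← Real.sin_pi_div_two_sub]
      congr 1
      linear_combination (-1/2 : ℝ) * hMc
    rw [hcos, rsin_prod n (c / 2 - u)]
    rw [Real.log_mul (by positivity) (by
      apply ne_of_gt
      apply Finset.prod_pos
      intro k hk
      have := hang2 k (Finset.mem_range.mp hk)
      convert this using 3
      · rfl
      rw [hc]; ring)]
    rw [Real.log_pow, Real.log_prod (fun k hk => by
      have := hang2 k (Finset.mem_range.mp hk)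
      apply ne_of_gt
      convert this using 3
      · rfl
      rw [hc]; ring)]
    push_cast
    congr 1
    apply Finset.sum_congr rfl
    intro k _
    congr 2
    rw [hc]; ring
  -- tan of Mu
  have hMu0 : 0 < (2 * (n:ℝ) + 1) * u := by positivity
  have hMu2 : (2 * (n:ℝ) + 1) * u < π / 2 := by
    have hprod := mul_lt_mul_of_pos_left hu1' hM
    linarith [hMc]
  have hsinMu : 0 < Real.sin ((2 * (n:ℝ) + 1) * u) :=
    Real.sin_pos_of_pos_of_lt_pi hMu0 (by linarith)
  have hcosMu : 0 < Real.cos ((2 * (n:ℝ) + 1) * u) :=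
    Real.cos_pos_of_mem_Ioo ⟨by linarith, hMu2⟩
  -- the four sum identities
  have eA2 : ∑ i ∈ Finset.range n, Real.log (Real.sin (u + ↑(n + 1 + i) * c))
      = ∑ i ∈ Finset.range n, Real.log (Real.sin (↑(1 + i) * c - u)) := by
    rw [← Finset.sum_range_reflect]
    apply Finset.sum_congr rfl
    intro i hi
    have hi' : i < n := Finset.mem_range.mp hi
    have hidx : n + 1 + (n - 1 - i) = 2 * n - i := by omega
    rw [hidx]
    have harg : u + ((2 * n - i : ℕ) : ℝ) * c = π - (((1 + i : ℕ) : ℝ) * c - u) := by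
      push_cast [Nat.cast_sub (by omega : i ≤ 2 * n)]
      linear_combination hMc
    rw [harg, Real.sin_pi_sub]
  have eB1 : ∑ k ∈ Finset.range (n + 1), Real.log (Real.sin (c / 2 - u + ↑k * c))
      = ∑ k ∈ Finset.range (n + 1), Real.log (Real.cos (u + ↑k * c)) := by
    rw [← Finset.sum_range_reflect]
    apply Finset.sum_congr rfl
    intro k hk
    have hk' : k < n + 1 := Finset.mem_range.mp hk
    have hidx : n + 1 - 1 - k = n - k := by omega
    rw [hidx]
    have harg : c / 2 - u + ((n - k : ℕ) : ℝ) * c = π / 2 - (u + (k : ℝ) * c) := by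
      push_cast [Nat.cast_sub (by omega : k ≤ n)]
      linear_combination hMc / 2
    rw [harg, Real.sin_pi_div_two_sub]
  have eB2 : ∑ i ∈ Finset.range n, Real.log (Real.sin (c / 2 - u + ↑(n + 1 + i) * c))
      = ∑ i ∈ Finset.range n, Real.log (Real.cos (↑(1 + i) * c - u)) := by
    apply Finset.sum_congr rfl
    intro i hi
    have harg : c / 2 - u + ((n + 1 + i : ℕ) : ℝ) * c
        = π - (π / 2 - (((1 + i : ℕ) : ℝ) * c - u)) := by
      push_cast
      linear_combination hMc / 2
    rw [harg, Real.sin_pi_sub, Real.sin_pi_div_two_sub]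
  have eT1 : ∑ j ∈ Finset.range (n + 1), Real.log (Real.tan (u + ↑j * π / (2 * ↑n + 1)))
      = ∑ j ∈ Finset.range (n + 1),
          (Real.log (Real.sin (u + ↑j * c)) - Real.log (Real.cos (u + ↑j * c))) := by
    apply Finset.sum_congr rfl
    intro j hj
    have hj' : (j : ℝ) ≤ n := by exact_mod_cast Nat.lt_succ_iff.mp (Finset.mem_range.mp hj)
    have hjc : u + (j : ℝ) * π / (2 * (n:ℝ) + 1) = u + (j : ℝ) * c := by rw [hc]; ring
    have h0 : 0 < u + (j : ℝ) * c := by positivity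
    have h2 : u + (j : ℝ) * c < π / 2 := by
      have hprod := mul_le_mul_of_nonneg_right hj' hc0.le
      linarith [hMc, hu1', hc0]
    have hs : 0 < Real.sin (u + (j : ℝ) * c) :=
      Real.sin_pos_of_pos_of_lt_pi h0 (by linarith)
    have hco : 0 < Real.cos (u + (j : ℝ) * c) :=
      Real.cos_pos_of_mem_Ioo ⟨by linarith, h2⟩
    rw [hjc, Real.tan_eq_sin_div_cos, Real.log_div (ne_of_gt hs) (ne_of_gt hco)]
  have eT2 : ∑ i ∈ Finset.range n, Real.log (Real.tan (↑(1 + i) * π / (2 * ↑n + 1) - u))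
      = ∑ i ∈ Finset.range n,
          (Real.log (Real.sin (↑(1 + i) * c - u)) - Real.log (Real.cos (↑(1 + i) * c - u))) := by
    apply Finset.sum_congr rfl
    intro i hi
    have hin : 1 + i ≤ n := by
      have := Finset.mem_range.mp hi
      omega
    have hi' : (1 + i : ℝ) ≤ n := by exact_mod_cast hin
    have hge : (1 : ℝ) ≤ ((1 + i : ℕ) : ℝ) := by push_cast; linarith [Nat.cast_nonneg (α := ℝ) i]
    have hjc : ((1 + i : ℕ) : ℝ) * π / (2 * (n:ℝ) + 1) = ((1 + i : ℕ) : ℝ) * c := by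
      rw [hc]; ring
    have h0 : 0 < ((1 + i : ℕ) : ℝ) * c - u := by
      have : c ≤ ((1 + i : ℕ) : ℝ) * c := le_mul_of_one_le_left (le_of_lt hc0) hge
      linarith
    have h2 : ((1 + i : ℕ) : ℝ) * c - u < π / 2 := by
      have hle : ((1 + i : ℕ) : ℝ) ≤ n := by push_cast; push_cast at hi'; linarith
      have hprod := mul_le_mul_of_nonneg_right hle hc0.le
      linarith [hMc, hu0, hc0]
    have hs : 0 < Real.sin (((1 + i : ℕ) : ℝ) * c - u) :=
      Real.sin_pos_of_pos_of_lt_pi h0 (by linarith)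
    have hco : 0 < Real.cos (((1 + i : ℕ) : ℝ) * c - u) :=
      Real.cos_pos_of_mem_Ioo ⟨by linarith, h2⟩
    rw [hjc, Real.tan_eq_sin_div_cos, Real.log_div (ne_of_gt hs) (ne_of_gt hco)]
  -- assemble
  rw [Real.tan_eq_sin_div_cos, Real.log_div (ne_of_gt hsinMu) (ne_of_gt hcosMu), key1, key2]
  rw [sum_split n (fun k => Real.log (Real.sin (u + ↑k * c)))]
  rw [sum_split n (fun k => Real.log (Real.sin (c / 2 - u + ↑k * c)))]
  rw [sum_icc n (fun j => Real.log (Real.tan (↑j * π / (2 * ↑n + 1) - u)))]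
  rw [eA2, eB1, eB2, eT1, eT2, Finset.sum_sub_distrib, Finset.sum_sub_distrib]
  ring


theorem stmt7 (n : ℕ) (r : ℝ) (hr0 : 0 ≤ r) (hr1 : r ≤ 1 / (2 * (2 * n + 1))) :
    T ((2 * n + 1) * r) =
      (2 * n + 1) * (∑ j ∈ Finset.range (n + 1), T (j / (2 * n + 1) + r)) -
      (2 * n + 1) * (∑ j ∈ Finset.Icc 1 n, T (j / (2 * n + 1) - r)) := by
  have hπ := Real.pi_pos
  have hM : (0:ℝ) < 2 * n + 1 := by positivity
  have hM0 : (2 * (n:ℝ) + 1) ≠ 0 := ne_of_gt hM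
  have T_def : ∀ x : ℝ, T x = ∫ θ in (0:ℝ)..(x * π), Real.log (Real.tan θ) := fun _ => rfl
  have hrπ : 0 ≤ r * π := by positivity
  have hrc : r * π ≤ π / (2 * (2 * (n:ℝ) + 1)) := by
    have h := mul_le_mul_of_nonneg_right hr1 hπ.le
    rwa [one_div, inv_mul_eq_div] at h
  have hsub : ∀ a b : ℝ, 0 ≤ a → b ≤ π / 2 → a ≤ b →
      IntervalIntegrable (fun x => Real.log (Real.tan x)) MeasureTheory.volume a b := by
    intro a b ha hb hab
    apply intervalIntegrable_log_tan.mono_set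
    apply Set.uIcc_subset_uIcc <;> rw [Set.uIcc_of_le (by positivity : (0:ℝ) ≤ π/2)]
    · exact ⟨ha, by linarith⟩
    · exact ⟨by linarith, hb⟩
  have hkey : ∀ j : ℝ, 0 ≤ j → j ≤ n → j * π / (2*(n:ℝ)+1) + r * π ≤ π / 2 := by
    intro j h0 h1
    have h2 : j * π / (2*(n:ℝ)+1) ≤ (n:ℝ) * π / (2*(n:ℝ)+1) := by gcongr
    have h4 : (n:ℝ) * π / (2*(n:ℝ)+1) + π / (2*(2*(n:ℝ)+1)) = π / 2 := by
      field_simp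
    linarith
  have hkey2 : ∀ j : ℝ, 1 ≤ j → j ≤ n → r * π ≤ j * π / (2*(n:ℝ)+1) := by
    intro j h0 h1
    have h2 : 1 * π / (2*(n:ℝ)+1) ≤ j * π / (2*(n:ℝ)+1) := by gcongr
    have h5 : π / (2*(2*(n:ℝ)+1)) ≤ 1 * π / (2*(n:ℝ)+1) := by
      rw [div_le_div_iff₀ (by positivity) hM]
      nlinarith
    linarith
  -- integrability of the two families
  have hjint : ∀ j ∈ Finset.range (n+1), IntervalIntegrable
      (fun u => Real.log (Real.tan (u + (j:ℝ) * π / (2 * (n:ℝ) + 1))))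
      MeasureTheory.volume 0 (r * π) := by
    intro j hj
    have hj' : (j:ℝ) ≤ n := by exact_mod_cast Nat.lt_succ_iff.mp (Finset.mem_range.mp hj)
    have hb : (j:ℝ) * π / (2*(n:ℝ)+1) + r * π ≤ π / 2 := hkey j (by positivity) hj'
    have h := (hsub ((j:ℝ) * π / (2*(n:ℝ)+1)) ((j:ℝ) * π / (2*(n:ℝ)+1) + r * π)
      (by positivity) hb (by linarith)).comp_add_right ((j:ℝ) * π / (2*(n:ℝ)+1))
    simpa using h
  have hjint2 : ∀ j ∈ Finset.Icc 1 n, IntervalIntegrable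
      (fun u => Real.log (Real.tan ((j:ℝ) * π / (2 * (n:ℝ) + 1) - u)))
      MeasureTheory.volume 0 (r * π) := by
    intro j hj
    obtain ⟨hj1, hjn⟩ := Finset.mem_Icc.mp hj
    have hj1' : (1:ℝ) ≤ (j:ℝ) := by exact_mod_cast hj1
    have hjn' : (j:ℝ) ≤ n := by exact_mod_cast hjn
    have hlow : r * π ≤ (j:ℝ) * π / (2*(n:ℝ)+1) := hkey2 j hj1' hjn'
    have hup : (j:ℝ) * π / (2*(n:ℝ)+1) ≤ π / 2 := by
      have := hkey (j:ℝ) (by linarith) hjn'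
      linarith
    have h := ((hsub ((j:ℝ) * π / (2*(n:ℝ)+1) - r * π) ((j:ℝ) * π / (2*(n:ℝ)+1))
      (by linarith) hup (by linarith)).symm).comp_sub_left ((j:ℝ) * π / (2*(n:ℝ)+1))
    simpa using h
  -- step A
  have stepA : T ((2 * (n:ℝ) + 1) * r) =
      (2 * (n:ℝ) + 1) * ∫ u in (0:ℝ)..(r * π), Real.log (Real.tan ((2 * (n:ℝ) + 1) * u)) := by
    rw [intervalIntegral.integral_comp_mul_left (fun θ => Real.log (Real.tan θ)) hM0]
    rw [smul_eq_mul, ← mul_assoc, mul_inv_cancel₀ hM0, one_mul, mul_zero, T_def]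
    congr 1
    ring
  -- step B : pointwise a.e. identity
  have stepB : (∫ u in (0:ℝ)..(r * π), Real.log (Real.tan ((2 * (n:ℝ) + 1) * u)))
      = ∫ u in (0:ℝ)..(r * π),
          ((∑ j ∈ Finset.range (n + 1), Real.log (Real.tan (u + (j:ℝ) * π / (2 * (n:ℝ) + 1)))) +
           ∑ j ∈ Finset.Icc 1 n, Real.log (Real.tan ((j:ℝ) * π / (2 * (n:ℝ) + 1) - u))) := by
    apply intervalIntegral.integral_congr_ae
    have h0 : ∀ᵐ u : ℝ, u ≠ π / (2 * (2 * (n:ℝ) + 1)) := by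
      rw [MeasureTheory.ae_iff]
      push_neg
      simp [Set.setOf_eq_eq_singleton]
    filter_upwards [h0] with u hne hu
    rw [Set.uIoc_of_le hrπ] at hu
    exact logtan_sum n u hu.1 (lt_of_le_of_ne (le_trans hu.2 hrc) hne)
  -- step C : split integral
  have stepC : (∫ u in (0:ℝ)..(r * π),
          ((∑ j ∈ Finset.range (n + 1), Real.log (Real.tan (u + (j:ℝ) * π / (2 * (n:ℝ) + 1)))) +
           ∑ j ∈ Finset.Icc 1 n, Real.log (Real.tan ((j:ℝ) * π / (2 * (n:ℝ) + 1) - u))))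
      = (∑ j ∈ Finset.range (n + 1),
            ∫ u in (0:ℝ)..(r * π), Real.log (Real.tan (u + (j:ℝ) * π / (2 * (n:ℝ) + 1)))) +
        ∑ j ∈ Finset.Icc 1 n,
            ∫ u in (0:ℝ)..(r * π), Real.log (Real.tan ((j:ℝ) * π / (2 * (n:ℝ) + 1) - u)) := by
    have h1 : IntervalIntegrable
        (fun u => ∑ j ∈ Finset.range (n + 1), Real.log (Real.tan (u + (j:ℝ) * π / (2 * (n:ℝ) + 1))))
        MeasureTheory.volume 0 (r * π) := by
      have h := IntervalIntegrable.sum (Finset.range (n + 1)) hjint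
      rwa [Finset.sum_fn] at h
    have h2 : IntervalIntegrable
        (fun u => ∑ j ∈ Finset.Icc 1 n, Real.log (Real.tan ((j:ℝ) * π / (2 * (n:ℝ) + 1) - u)))
        MeasureTheory.volume 0 (r * π) := by
      have h := IntervalIntegrable.sum (Finset.Icc 1 n) hjint2
      rwa [Finset.sum_fn] at h
    rw [intervalIntegral.integral_add h1 h2,
      intervalIntegral.integral_finset_sum hjint,
      intervalIntegral.integral_finset_sum hjint2]
  -- step D : each integral in terms of T
  have hInt1 : ∀ j ∈ Finset.range (n+1),
      (∫ u in (0:ℝ)..(r * π), Real.log (Real.tan (u + (j:ℝ) * π / (2 * (n:ℝ) + 1))))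
        = T ((j:ℝ)/(2*(n:ℝ)+1) + r) - T ((j:ℝ)/(2*(n:ℝ)+1)) := by
    intro j hj
    have hj' : (j:ℝ) ≤ n := by exact_mod_cast Nat.lt_succ_iff.mp (Finset.mem_range.mp hj)
    have hb2 : ((j:ℝ)/(2*(n:ℝ)+1) + r) * π ≤ π / 2 := by
      have h := hkey (j:ℝ) (by positivity) hj'
      have he : ((j:ℝ)/(2*(n:ℝ)+1) + r) * π = (j:ℝ) * π / (2*(n:ℝ)+1) + r * π := by ring
      linarith [he.le, he.ge]
    have hb1 : ((j:ℝ)/(2*(n:ℝ)+1)) * π ≤ π / 2 := by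
      have h := hkey (j:ℝ) (by positivity) hj'
      have he : ((j:ℝ)/(2*(n:ℝ)+1)) * π = (j:ℝ) * π / (2*(n:ℝ)+1) := by ring
      nlinarith [hrπ]
    have ha2 : (0:ℝ) ≤ ((j:ℝ)/(2*(n:ℝ)+1)) * π := by positivity
    have ha2' : ((j:ℝ)/(2*(n:ℝ)+1)) * π ≤ ((j:ℝ)/(2*(n:ℝ)+1) + r) * π := by nlinarith
    have e1 := intervalIntegral.integral_interval_sub_left
      (hsub 0 (((j:ℝ)/(2*(n:ℝ)+1) + r) * π) le_rfl hb2 (by linarith))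
      (hsub 0 (((j:ℝ)/(2*(n:ℝ)+1)) * π) le_rfl hb1 ha2)
    rw [intervalIntegral.integral_comp_add_right (fun θ => Real.log (Real.tan θ)), T_def, T_def, e1]
    congr 1 <;> ring
  have hInt2 : ∀ j ∈ Finset.Icc 1 n,
      (∫ u in (0:ℝ)..(r * π), Real.log (Real.tan ((j:ℝ) * π / (2 * (n:ℝ) + 1) - u)))
        = T ((j:ℝ)/(2*(n:ℝ)+1)) - T ((j:ℝ)/(2*(n:ℝ)+1) - r) := by
    intro j hj
    obtain ⟨hj1, hjn⟩ := Finset.mem_Icc.mp hj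
    have hj1' : (1:ℝ) ≤ (j:ℝ) := by exact_mod_cast hj1
    have hjn' : (j:ℝ) ≤ n := by exact_mod_cast hjn
    have hlow : r * π ≤ (j:ℝ) * π / (2*(n:ℝ)+1) := hkey2 j hj1' hjn'
    have hb1 : ((j:ℝ)/(2*(n:ℝ)+1)) * π ≤ π / 2 := by
      have h := hkey (j:ℝ) (by linarith) hjn'
      have he : ((j:ℝ)/(2*(n:ℝ)+1)) * π = (j:ℝ) * π / (2*(n:ℝ)+1) := by ring
      nlinarith [hrπ]
    have hb2 : ((j:ℝ)/(2*(n:ℝ)+1) - r) * π ≤ π / 2 := by nlinarith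
    have ha2 : (0:ℝ) ≤ ((j:ℝ)/(2*(n:ℝ)+1) - r) * π := by
      have he : ((j:ℝ)/(2*(n:ℝ)+1) - r) * π = (j:ℝ) * π / (2*(n:ℝ)+1) - r * π := by ring
      linarith [he.le, he.ge]
    have ha2' : ((j:ℝ)/(2*(n:ℝ)+1) - r) * π ≤ ((j:ℝ)/(2*(n:ℝ)+1)) * π := by nlinarith
    have e1 := intervalIntegral.integral_interval_sub_left
      (hsub 0 (((j:ℝ)/(2*(n:ℝ)+1)) * π) le_rfl hb1 (by positivity))
      (hsub 0 (((j:ℝ)/(2*(n:ℝ)+1) - r) * π) le_rfl hb2 ha2)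
    rw [intervalIntegral.integral_comp_sub_left (fun θ => Real.log (Real.tan θ)), T_def, T_def, e1]
    congr 1 <;> ring
  -- middle sums equal
  have hT0 : T 0 = 0 := by
    rw [T_def, zero_mul, intervalIntegral.integral_same]
  have hmid : (∑ j ∈ Finset.range (n + 1), T ((j:ℝ)/(2*(n:ℝ)+1)))
      = ∑ j ∈ Finset.Icc 1 n, T ((j:ℝ)/(2*(n:ℝ)+1)) := by
    rw [Finset.sum_range_succ' (fun j => T ((j:ℝ)/(2*(n:ℝ)+1))) n,
      sum_icc n (fun j => T ((j:ℝ)/(2*(n:ℝ)+1)))]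
    simp only [Nat.cast_zero, zero_div, hT0, add_zero]
    apply Finset.sum_congr rfl
    intro i _
    have : i + 1 = 1 + i := by omega
    rw [this]
  -- assemble
  rw [stepA, stepB, stepC, Finset.sum_congr rfl hInt1, Finset.sum_congr rfl hInt2,
    Finset.sum_sub_distrib, Finset.sum_sub_distrib, hmid]
  ring
end

section
/- 2·∫_0^{π/4} log(tan θ) dθ = 3·∫_0^{π/12} log(tan θ) dθ. -/
open Real MeasureTheory Set intervalIntegral

/-- integrability of `-log` on `Ioc 0 b` for `b ≤ 1`. -/
lemma neg_log_integrable {b : ℝ} (hb : 0 < b) (hb1 : b ≤ 1) :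
    IntegrableOn (fun x : ℝ => -Real.log x) (Set.Ioc 0 b) := by
  apply integrableOn_deriv_of_nonneg (g := fun x : ℝ => x - x * Real.log x)
  · exact (continuous_id.sub Real.continuous_mul_log).continuousOn
  · intro x hx
    have h1 : HasDerivAt (fun x : ℝ => x * Real.log x) (Real.log x + 1) x := by
      have := (hasDerivAt_id x).mul (Real.hasDerivAt_log hx.1.ne')
      rw [id_eq, mul_inv_cancel₀ hx.1.ne', one_mul] at this
      exact this
    have := (hasDerivAt_id x).sub h1
    rw [show (1:ℝ) - (Real.log x + 1) = -Real.log x by ring] at this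
    exact this
  · intro x hx
    have : Real.log x < 0 := Real.log_neg hx.1 (lt_of_lt_of_le hx.2 hb1)
    linarith

/-- integrability of log ∘ tan on [0, b] for 0 < b ≤ π/4. -/
lemma logtan_integrable_s8 {b : ℝ} (hb : 0 < b) (hb4 : b ≤ π / 4) :
    IntervalIntegrable (fun θ => Real.log (Real.tan θ)) volume 0 b := by
  have hpi := Real.pi_pos
  rw [intervalIntegrable_iff_integrableOn_Ioc_of_le hb.le]
  apply (neg_log_integrable hb (by nlinarith [Real.pi_lt_d2])).mono' (g := fun x : ℝ => -Real.log x)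
  · apply ContinuousOn.aestronglyMeasurable _ measurableSet_Ioc
    apply ContinuousOn.log
    · apply Real.continuousOn_tan.mono
      intro x hx
      exact ne_of_gt (Real.cos_pos_of_mem_Ioo ⟨by linarith [hx.1], by linarith [hx.2]⟩)
    · intro x hx
      exact ne_of_gt (Real.tan_pos_of_pos_of_lt_pi_div_two hx.1 (by linarith [hx.2]))
  · filter_upwards [ae_restrict_mem measurableSet_Ioc] with x hx
    have hx2 : x < π / 2 := by linarith [hx.2]
    have h1 : x < Real.tan x := Real.lt_tan hx.1 hx2
    have h2 : Real.tan x ≤ 1 := by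
      rcases lt_or_eq_of_le (hx.2.trans hb4) with h | h
      · have := Real.tan_lt_tan_of_nonneg_of_lt_pi_div_two hx.1.le (by linarith) h
        rw [Real.tan_pi_div_four] at this; linarith
      · rw [h, Real.tan_pi_div_four]
    have hlog1 : Real.log x ≤ Real.log (Real.tan x) :=
      Real.log_le_log (hx.1) h1.le
    have hlog2 : Real.log (Real.tan x) ≤ 0 := Real.log_nonpos (by linarith [hx.1]) h2
    rw [Real.norm_eq_abs, abs_of_nonpos hlog2]
    linarith

/-- continuity of log ∘ tan on intervals inside (0, π/2) -/
lemma logtan_contOn {a b : ℝ} (ha : 0 < a) (hab : a ≤ b) (hb : b < π / 2) :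
    ContinuousOn (fun θ => Real.log (Real.tan θ)) (Set.uIcc a b) := by
  rw [Set.uIcc_of_le hab]
  apply ContinuousOn.log
  · apply Real.continuousOn_tan.mono
    intro x hx
    exact ne_of_gt (Real.cos_pos_of_mem_Ioo ⟨by linarith [hx.1, Real.pi_pos], by linarith [hx.2]⟩)
  · intro x hx
    exact ne_of_gt (Real.tan_pos_of_pos_of_lt_pi_div_two (lt_of_lt_of_le ha hx.1)
      (lt_of_le_of_lt hx.2 hb))

lemma sin_triple (θ : ℝ) :
    Real.sin (3 * θ) = 4 * (Real.sin θ * (Real.sin (π/3 - θ) * Real.sin (π/3 + θ))) := by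
  rw [Real.sin_three_mul, Real.sin_sub, Real.sin_add, Real.sin_pi_div_three, Real.cos_pi_div_three]
  have h := Real.sin_sq_add_cos_sq θ
  have h3 : Real.sqrt 3 ^ 2 = 3 := Real.sq_sqrt (by norm_num)
  linear_combination (-3*Real.sin θ)*h + (-Real.sin θ*Real.cos θ^2)*h3

lemma cos_triple (θ : ℝ) :
    Real.cos (3 * θ) = 4 * (Real.cos θ * (Real.cos (π/3 - θ) * Real.cos (π/3 + θ))) := by
  rw [Real.cos_three_mul, Real.cos_sub, Real.cos_add, Real.sin_pi_div_three, Real.cos_pi_div_three]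
  have h := Real.sin_sq_add_cos_sq θ
  have h3 : Real.sqrt 3 ^ 2 = 3 := Real.sq_sqrt (by norm_num)
  linear_combination (3*Real.cos θ)*h + (Real.cos θ*Real.sin θ^2)*h3

/-- the triplication identity for log tan, valid for 0 < θ ≤ π/12 -/
lemma logtan_triple {θ : ℝ} (h0 : 0 < θ) (h1 : θ ≤ π / 12) :
    Real.log (Real.tan (3 * θ)) =
      Real.log (Real.tan θ) + Real.log (Real.tan (π/3 - θ)) + Real.log (Real.tan (π/3 + θ)) := by
  have hpi := Real.pi_pos
  have hs1 : 0 < Real.sin θ := Real.sin_pos_of_pos_of_lt_pi h0 (by linarith)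
  have hc1 : 0 < Real.cos θ := Real.cos_pos_of_mem_Ioo ⟨by linarith, by linarith⟩
  have hs2 : 0 < Real.sin (π/3 - θ) := Real.sin_pos_of_pos_of_lt_pi (by linarith) (by linarith)
  have hc2 : 0 < Real.cos (π/3 - θ) := Real.cos_pos_of_mem_Ioo ⟨by linarith, by linarith⟩
  have hs3 : 0 < Real.sin (π/3 + θ) := Real.sin_pos_of_pos_of_lt_pi (by linarith) (by linarith)
  have hc3 : 0 < Real.cos (π/3 + θ) := Real.cos_pos_of_mem_Ioo ⟨by linarith, by linarith⟩
  have hs0 : 0 < Real.sin (3 * θ) := Real.sin_pos_of_pos_of_lt_pi (by linarith) (by linarith)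
  have hc0 : 0 < Real.cos (3 * θ) := Real.cos_pos_of_mem_Ioo ⟨by linarith, by linarith⟩
  rw [Real.tan_eq_sin_div_cos (3*θ), Real.tan_eq_sin_div_cos θ,
    Real.tan_eq_sin_div_cos (π/3 - θ), Real.tan_eq_sin_div_cos (π/3 + θ),
    Real.log_div hs0.ne' hc0.ne', Real.log_div hs1.ne' hc1.ne',
    Real.log_div hs2.ne' hc2.ne', Real.log_div hs3.ne' hc3.ne',
    sin_triple, cos_triple,
    Real.log_mul (by norm_num) (by positivity), Real.log_mul hs1.ne' (by positivity),
    Real.log_mul hs2.ne' hs3.ne',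
    Real.log_mul (by norm_num) (by positivity), Real.log_mul hc1.ne' (by positivity),
    Real.log_mul hc2.ne' hc3.ne']
  ring

open Real
theorem stmt8 :
    2 * ∫ θ in (0:ℝ)..(π / 4), Real.log (Real.tan θ) =
      3 * ∫ θ in (0:ℝ)..(π / 12), Real.log (Real.tan θ) := by
  have hpi := Real.pi_pos
  set f : ℝ → ℝ := fun θ => Real.log (Real.tan θ) with hf
  -- integrability facts
  have i1 : IntervalIntegrable f volume 0 (π/12) :=
    logtan_integrable_s8 (by linarith) (by linarith)
  have i3 : IntervalIntegrable f volume (π/12) (π/4) :=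
    (logtan_contOn (by linarith) (by linarith) (by linarith)).intervalIntegrable
  have i4 : IntervalIntegrable f volume (π/4) (π/3) :=
    (logtan_contOn (by linarith) (by linarith) (by linarith)).intervalIntegrable
  have i5 : IntervalIntegrable f volume (π/3) (5*π/12) :=
    (logtan_contOn (by linarith) (by linarith) (by linarith)).intervalIntegrable
  have iA : IntervalIntegrable (fun x => f (π/3 - x)) volume 0 (π/12) := by
    apply ContinuousOn.intervalIntegrable
    apply (logtan_contOn (a := π/4) (b := π/3) (by linarith) (by linarith) (by linarith)).comp
      (continuous_const.sub continuous_id).continuousOn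
    intro x hx
    rw [Set.uIcc_of_le (by linarith)] at hx ⊢
    exact ⟨by simp; linarith [hx.2], by simp; linarith [hx.1]⟩
  have iB : IntervalIntegrable (fun x => f (π/3 + x)) volume 0 (π/12) := by
    apply ContinuousOn.intervalIntegrable
    apply (logtan_contOn (a := π/3) (b := 5*π/12) (by linarith) (by linarith) (by linarith)).comp
      (continuous_const.add continuous_id).continuousOn
    intro x hx
    rw [Set.uIcc_of_le (by linarith)] at hx ⊢
    exact ⟨by simp; linarith [hx.1], by simp; linarith [hx.2]⟩
  -- step A: substitution u = 3θ
  have stepA : (∫ x in (0:ℝ)..(π/12), f (3 * x)) = (1/3) * ∫ x in (0:ℝ)..(π/4), f x := by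
    have := intervalIntegral.integral_comp_mul_left f (a := 0) (b := π/12) (c := 3)
      (by norm_num)
    rw [this]
    norm_num [smul_eq_mul]
    ring_nf
  -- step B: triplication identity under the integral
  have stepB : (∫ x in (0:ℝ)..(π/12), f (3 * x)) =
      ∫ x in (0:ℝ)..(π/12), (f x + f (π/3 - x) + f (π/3 + x)) := by
    apply intervalIntegral.integral_congr_ae
    apply MeasureTheory.ae_of_all
    intro x hx
    rw [Set.uIoc_of_le (by linarith)] at hx
    exact logtan_triple hx.1 hx.2
  -- step C: splitting the sum
  have stepC : (∫ x in (0:ℝ)..(π/12), (f x + f (π/3 - x) + f (π/3 + x))) =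
      (∫ x in (0:ℝ)..(π/12), f x) + (∫ x in (0:ℝ)..(π/12), f (π/3 - x))
        + ∫ x in (0:ℝ)..(π/12), f (π/3 + x) := by
    rw [intervalIntegral.integral_add (i1.add iA) iB, intervalIntegral.integral_add i1 iA]
  -- step D: shifting substitutions
  have stepD1 : (∫ x in (0:ℝ)..(π/12), f (π/3 - x)) = ∫ x in (π/4:ℝ)..(π/3), f x := by
    rw [intervalIntegral.integral_comp_sub_left f (π/3)]
    norm_num
    ring_nf
  have stepD2 : (∫ x in (0:ℝ)..(π/12), f (π/3 + x)) = ∫ x in (π/3:ℝ)..(5*π/12), f x := by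
    rw [intervalIntegral.integral_comp_add_left f (π/3)]
    norm_num
    ring_nf
  -- step E: adjacent intervals
  have stepE : (∫ x in (π/4:ℝ)..(π/3), f x) + (∫ x in (π/3:ℝ)..(5*π/12), f x)
      = ∫ x in (π/4:ℝ)..(5*π/12), f x :=
    intervalIntegral.integral_add_adjacent_intervals i4 i5
  -- step F: reflection x ↦ π/2 - x
  have stepF : (∫ x in (π/4:ℝ)..(5*π/12), f x) = -∫ x in (π/12:ℝ)..(π/4), f x := by
    have F1 : (∫ x in (π/4:ℝ)..(5*π/12), f (π/2 - x)) =
        ∫ x in (π/4:ℝ)..(5*π/12), -f x := by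
      apply intervalIntegral.integral_congr
      intro x _
      simp only [hf, Real.tan_pi_div_two_sub, Real.log_inv]
    have F2 := intervalIntegral.integral_comp_sub_left f (π/2) (a := π/4) (b := 5*π/12)
    rw [intervalIntegral.integral_neg] at F1
    have e1 : π/2 - 5*π/12 = π/12 := by ring
    have e2 : π/2 - π/4 = π/4 := by ring
    rw [e1, e2] at F2
    rw [← F2, F1]
    ring
  -- step G: J = I + middle
  have stepG : (∫ x in (0:ℝ)..(π/12), f x) + (∫ x in (π/12:ℝ)..(π/4), f x)
      = ∫ x in (0:ℝ)..(π/4), f x :=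
    intervalIntegral.integral_add_adjacent_intervals i1 i3
  have key := stepA.symm.trans (stepB.trans stepC)
  rw [stepD1, stepD2] at key
  -- combine everything
  have : (1/3) * (∫ x in (0:ℝ)..(π/4), f x) =
      (∫ x in (0:ℝ)..(π/12), f x) - ((∫ x in (0:ℝ)..(π/4), f x) - ∫ x in (0:ℝ)..(π/12), f x) := by
    rw [key, add_assoc, stepE, stepF]
    linarith [stepG]
  linarith [this]
end

section
/- 2·∫_0^{π/4} log(tan θ) dθ = 5·∫_0^{3π/20} log(tan θ) dθ - 5·∫_0^{π/20} log(tan θ) dθ. -/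
open Real MeasureTheory

lemma logsin_ii {a : ℝ} (ha : 0 < a) (ha' : a < π/2) :
    IntervalIntegrable (fun θ => Real.log (Real.sin θ)) volume 0 a := by
  rw [intervalIntegrable_iff_integrableOn_Ioc_of_le ha.le]
  have hg : IntegrableOn (fun x : ℝ => Real.log (π/2) + 2 * x ^ (-(1:ℝ)/2)) (Set.Ioc 0 a) := by
    apply Integrable.add
    · exact integrableOn_const (by simp [measure_Ioc_lt_top])
    · have h := (intervalIntegral.intervalIntegrable_rpow' (a := 0) (b := a)
        (r := -(1:ℝ)/2) (by norm_num))
      rw [intervalIntegrable_iff_integrableOn_Ioc_of_le ha.le] at h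
      exact h.const_mul 2
  apply Integrable.mono' hg
  · exact (Real.measurable_log.comp Real.measurable_sin).aestronglyMeasurable
  · filter_upwards [MeasureTheory.ae_restrict_mem measurableSet_Ioc] with x hx
    obtain ⟨hx0, hxa⟩ := hx
    have hsp : 0 < Real.sin x := Real.sin_pos_of_pos_of_lt_pi hx0 (by linarith [pi_pos])
    have hs1 : Real.sin x ≤ 1 := Real.sin_le_one x
    have hlb : 2/π * x ≤ Real.sin x := Real.mul_le_sin hx0.le (by linarith)
    have h1 : Real.log (2/π * x) ≤ Real.log (Real.sin x) :=
      Real.log_le_log (by positivity) hlb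
    have h2 : Real.log (2/π * x) = Real.log x - Real.log (π/2) := by
      rw [Real.log_mul (by positivity) hx0.ne', Real.log_div (by norm_num) pi_pos.ne',
        Real.log_div (by positivity) (by norm_num)]
      ring
    have hneg : Real.log (Real.sin x) ≤ 0 := Real.log_nonpos hsp.le hs1
    rw [Real.norm_eq_abs, abs_of_nonpos hneg]
    have key : -Real.log x ≤ 2 * x ^ (-(1:ℝ)/2) := by
      rcases le_or_gt x 1 with hle | hgt
      · have := Real.log_le_rpow_div (x := x⁻¹) (ε := 1/2) (by positivity) (by norm_num)
        rw [Real.log_inv, Real.inv_rpow hx0.le] at this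
        calc -Real.log x ≤ (x ^ (1/2 : ℝ))⁻¹ / (1/2) := this
          _ = 2 * x ^ (-(1:ℝ)/2) := by
            rw [← Real.rpow_neg hx0.le]; ring_nf
      · have : 0 < Real.log x := Real.log_pos hgt
        have : (0:ℝ) ≤ 2 * x ^ (-(1:ℝ)/2) := by positivity
        linarith
    linarith [h1, h2 ▸ h1]

lemma logtan_ii {a : ℝ} (ha : 0 < a) (ha' : a < π/2) :
    IntervalIntegrable (fun θ => Real.log (Real.tan θ)) volume 0 a := by
  have hcos : IntervalIntegrable (fun θ => Real.log (Real.cos θ)) volume 0 a := by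
    apply ContinuousOn.intervalIntegrable
    apply ContinuousOn.log Real.continuous_cos.continuousOn
    intro x hx
    rw [Set.uIcc_of_le ha.le] at hx
    exact (Real.cos_pos_of_mem_Ioo ⟨by linarith [hx.1, pi_pos], lt_of_le_of_lt hx.2 ha'⟩).ne'
  have h := (logsin_ii ha ha').sub hcos
  apply h.congr
  intro x hx
  rw [Set.uIoc_of_le ha.le] at hx
  have hc : Real.cos x ≠ 0 :=
    (Real.cos_pos_of_mem_Ioo ⟨by linarith [hx.1, pi_pos], lt_of_le_of_lt hx.2 ha'⟩).ne'
  have hs : Real.sin x ≠ 0 :=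
    (Real.sin_pos_of_pos_of_lt_pi hx.1 (by linarith [pi_pos, hx.2])).ne'
  simp only [Real.tan_eq_sin_div_cos, Real.log_div hs hc]

lemma sin_prod (a b : ℝ) : Real.sin (a+b) * Real.sin (a-b) = Real.sin a^2 - Real.sin b^2 := by
  rw [Real.sin_add, Real.sin_sub]
  linear_combination Real.sin a^2 * Real.sin_sq_add_cos_sq b - Real.sin b^2 * Real.sin_sq_add_cos_sq a

lemma cos_prod (a b : ℝ) : Real.cos (a+b) * Real.cos (a-b) = Real.cos a^2 - Real.sin b^2 := by
  rw [Real.cos_add, Real.cos_sub]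
  linear_combination Real.cos a^2 * Real.sin_sq_add_cos_sq b - Real.sin b^2 * Real.sin_sq_add_cos_sq a

lemma c36 : Real.cos (π/5)^2 = (3 + √5)/8 := by
  rw [Real.cos_pi_div_five]
  linear_combination (1/16) * Real.sq_sqrt (by norm_num : (5:ℝ) ≥ 0)

lemma s36 : Real.sin (π/5)^2 = (5 - √5)/8 := by
  linear_combination Real.sin_sq_add_cos_sq (π/5) - c36

lemma c72 : Real.cos (2*π/5)^2 = (3 - √5)/8 := by
  have hd : Real.cos (2*π/5) = 2*Real.cos (π/5)^2 - 1 := by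
    rw [show 2*π/5 = 2*(π/5) by ring, Real.cos_two_mul]
  rw [hd, c36]
  linear_combination (1/16) * Real.sq_sqrt (by norm_num : (5:ℝ) ≥ 0)

lemma s72 : Real.sin (2*π/5)^2 = (5 + √5)/8 := by
  linear_combination Real.sin_sq_add_cos_sq (2*π/5) - c72

lemma sin_five (θ : ℝ) : Real.sin (5*θ) =
    16 * Real.sin θ * (Real.sin (π/5)^2 - Real.sin θ^2) * (Real.sin (2*π/5)^2 - Real.sin θ^2) := by
  rw [s36, s72, show (5:ℝ)*θ = θ+θ+θ+θ+θ by ring]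
  simp only [Real.sin_add, Real.cos_add]
  linear_combination (5*Real.sin θ*Real.cos θ^2 - 15*Real.sin θ^3 + 5*Real.sin θ) *
      Real.sin_sq_add_cos_sq θ
    + (Real.sin θ/4) * Real.sq_sqrt (by norm_num : (5:ℝ) ≥ 0)

lemma cos_five (θ : ℝ) : Real.cos (5*θ) =
    16 * Real.cos θ * (Real.cos (π/5)^2 - Real.sin θ^2) * (Real.cos (2*π/5)^2 - Real.sin θ^2) := by
  rw [c36, c72, show (5:ℝ)*θ = θ+θ+θ+θ+θ by ring]
  simp only [Real.sin_add, Real.cos_add]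
  linear_combination (-11*Real.cos θ*Real.sin θ^2 + Real.cos θ^3 + Real.cos θ) *
      Real.sin_sq_add_cos_sq θ
    + (Real.cos θ/4) * Real.sq_sqrt (by norm_num : (5:ℝ) ≥ 0)

lemma tan_five_log {θ : ℝ} (h1 : 0 < θ) (h2 : θ ≤ π/20) :
    Real.log (Real.tan (5*θ)) =
      Real.log (Real.tan θ) + Real.log (Real.tan (π/5 - θ)) + Real.log (Real.tan (π/5 + θ))
      + Real.log (Real.tan (2*π/5 - θ)) + Real.log (Real.tan (2*π/5 + θ)) := by
  have hπ := Real.pi_pos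
  have hlt : ∀ x : ℝ, 0 < x → x < π/2 →
      Real.log (Real.tan x) = Real.log (Real.sin x) - Real.log (Real.cos x) := by
    intro x hx1 hx2
    rw [Real.tan_eq_sin_div_cos,
      Real.log_div (Real.sin_pos_of_pos_of_lt_pi hx1 (by linarith)).ne'
        (Real.cos_pos_of_mem_Ioo ⟨by linarith, hx2⟩).ne']
  -- positivity of all sines and cosines
  have sp : ∀ x : ℝ, 0 < x → x < π/2 → 0 < Real.sin x :=
    fun x hx1 hx2 => Real.sin_pos_of_pos_of_lt_pi hx1 (by linarith)
  have cp : ∀ x : ℝ, 0 < x → x < π/2 → 0 < Real.cos x :=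
    fun x hx1 hx2 => Real.cos_pos_of_mem_Ioo ⟨by linarith, hx2⟩
  have b0 : 0 < 5*θ := by linarith
  have b0' : 5*θ < π/2 := by linarith
  have b1 : 0 < π/5 - θ := by linarith
  have b1' : π/5 - θ < π/2 := by linarith
  have b2 : 0 < π/5 + θ := by linarith
  have b2' : π/5 + θ < π/2 := by linarith
  have b3 : 0 < 2*π/5 - θ := by linarith
  have b3' : 2*π/5 - θ < π/2 := by linarith
  have b4 : 0 < 2*π/5 + θ := by linarith
  have b4' : 2*π/5 + θ < π/2 := by linarith
  have bθ' : θ < π/2 := by linarith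
  rw [hlt _ b0 b0', hlt _ h1 bθ', hlt _ b1 b1', hlt _ b2 b2', hlt _ b3 b3', hlt _ b4 b4']
  have hs : Real.sin (5*θ) = 16 * Real.sin θ * (Real.sin (π/5+θ) * Real.sin (π/5-θ))
      * (Real.sin (2*π/5+θ) * Real.sin (2*π/5-θ)) := by
    rw [sin_prod, sin_prod, sin_five]
  have hc : Real.cos (5*θ) = 16 * Real.cos θ * (Real.cos (π/5+θ) * Real.cos (π/5-θ))
      * (Real.cos (2*π/5+θ) * Real.cos (2*π/5-θ)) := by
    rw [cos_prod, cos_prod, cos_five]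
  have E1 : Real.log (Real.sin (5*θ)) = Real.log 16 + Real.log (Real.sin θ)
      + (Real.log (Real.sin (π/5+θ)) + Real.log (Real.sin (π/5-θ)))
      + (Real.log (Real.sin (2*π/5+θ)) + Real.log (Real.sin (2*π/5-θ))) := by
    rw [hs,
      Real.log_mul (mul_ne_zero (mul_ne_zero (by norm_num) (sp _ h1 bθ').ne')
        (mul_ne_zero (sp _ b2 b2').ne' (sp _ b1 b1').ne'))
        (mul_ne_zero (sp _ b4 b4').ne' (sp _ b3 b3').ne'),
      Real.log_mul (mul_ne_zero (by norm_num) (sp _ h1 bθ').ne')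
        (mul_ne_zero (sp _ b2 b2').ne' (sp _ b1 b1').ne'),
      Real.log_mul (by norm_num : (16:ℝ) ≠ 0) (sp _ h1 bθ').ne',
      Real.log_mul (sp _ b2 b2').ne' (sp _ b1 b1').ne',
      Real.log_mul (sp _ b4 b4').ne' (sp _ b3 b3').ne']
  have E2 : Real.log (Real.cos (5*θ)) = Real.log 16 + Real.log (Real.cos θ)
      + (Real.log (Real.cos (π/5+θ)) + Real.log (Real.cos (π/5-θ)))
      + (Real.log (Real.cos (2*π/5+θ)) + Real.log (Real.cos (2*π/5-θ))) := by
    rw [hc,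
      Real.log_mul (mul_ne_zero (mul_ne_zero (by norm_num) (cp _ h1 bθ').ne')
        (mul_ne_zero (cp _ b2 b2').ne' (cp _ b1 b1').ne'))
        (mul_ne_zero (cp _ b4 b4').ne' (cp _ b3 b3').ne'),
      Real.log_mul (mul_ne_zero (by norm_num) (cp _ h1 bθ').ne')
        (mul_ne_zero (cp _ b2 b2').ne' (cp _ b1 b1').ne'),
      Real.log_mul (by norm_num : (16:ℝ) ≠ 0) (cp _ h1 bθ').ne',
      Real.log_mul (cp _ b2 b2').ne' (cp _ b1 b1').ne',
      Real.log_mul (cp _ b4 b4').ne' (cp _ b3 b3').ne']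
  rw [E1, E2]; ring

theorem stmt9 :
    2 * ∫ θ in (0:ℝ)..(π / 4), Real.log (Real.tan θ) =
      5 * (∫ θ in (0:ℝ)..(3 * π / 20), Real.log (Real.tan θ)) -
      5 * ∫ θ in (0:ℝ)..(π / 20), Real.log (Real.tan θ) := by
  have hπ := Real.pi_pos
  set f : ℝ → ℝ := fun θ => Real.log (Real.tan θ) with hf
  have h920 : 9*π/20 < π/2 := by linarith
  have hI : IntervalIntegrable f volume 0 (9*π/20) := logtan_ii (by positivity) h920
  have sub : ∀ a b : ℝ, 0 ≤ a → a ≤ 9*π/20 → 0 ≤ b → b ≤ 9*π/20 →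
      IntervalIntegrable f volume a b := by
    intro a b h1 h2 h3 h4
    exact hI.mono_set (Set.uIcc_subset_uIcc (Set.mem_uIcc.mpr (Or.inl ⟨h1, h2⟩))
      (Set.mem_uIcc.mpr (Or.inl ⟨h3, h4⟩)))
  -- integrability of the five translated integrands on 0..π/20
  have A1 : IntervalIntegrable f volume 0 (π/20) :=
    sub 0 (π/20) le_rfl (by linarith) (by positivity) (by linarith)
  have A2 : IntervalIntegrable (fun θ => f (π/5 - θ)) volume 0 (π/20) := by
    have h := (sub (3*π/20) (π/5) (by positivity) (by linarith) (by positivity)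
      (by linarith)).comp_sub_left (π/5)
    rw [show π/5 - 3*π/20 = π/20 by ring, show π/5 - π/5 = 0 by ring] at h
    exact h.symm
  have A3 : IntervalIntegrable (fun θ => f (π/5 + θ)) volume 0 (π/20) := by
    have h := (sub (π/5) (π/4) (by positivity) (by linarith) (by positivity)
      (by linarith)).comp_add_left (π/5)
    rw [show π/5 - π/5 = 0 by ring, show π/4 - π/5 = π/20 by ring] at h
    exact h
  have A4 : IntervalIntegrable (fun θ => f (2*π/5 - θ)) volume 0 (π/20) := by
    have h := (sub (7*π/20) (2*π/5) (by positivity) (by linarith) (by positivity)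
      (by linarith)).comp_sub_left (2*π/5)
    rw [show 2*π/5 - 7*π/20 = π/20 by ring, show 2*π/5 - 2*π/5 = 0 by ring] at h
    exact h.symm
  have A5 : IntervalIntegrable (fun θ => f (2*π/5 + θ)) volume 0 (π/20) := by
    have h := (sub (2*π/5) (9*π/20) (by positivity) (by linarith) (by positivity)
      (by linarith)).comp_add_left (2*π/5)
    rw [show 2*π/5 - 2*π/5 = 0 by ring, show 9*π/20 - 2*π/5 = π/20 by ring] at h
    exact h
  -- key pointwise identity integrated
  have key : ∫ θ in (0:ℝ)..(π/20), f (5*θ) =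
      ∫ θ in (0:ℝ)..(π/20), (f θ + f (π/5 - θ) + f (π/5 + θ) + f (2*π/5 - θ) + f (2*π/5 + θ)) := by
    apply intervalIntegral.integral_congr_ae
    apply Filter.Eventually.of_forall
    intro x hx
    rw [Set.uIoc_of_le (by positivity : (0:ℝ) ≤ π/20)] at hx
    exact tan_five_log hx.1 hx.2
  rw [intervalIntegral.integral_add (((A1.add A2).add A3).add A4) A5,
    intervalIntegral.integral_add ((A1.add A2).add A3) A4,
    intervalIntegral.integral_add (A1.add A2) A3,
    intervalIntegral.integral_add A1 A2] at key
  -- change of variables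
  have c1 : ∫ θ in (0:ℝ)..(π/20), f (5*θ) = (5:ℝ)⁻¹ * ∫ x in (0:ℝ)..(π/4), f x := by
    rw [intervalIntegral.integral_comp_mul_left f (by norm_num : (5:ℝ) ≠ 0),
      show (5:ℝ)*0 = 0 by ring, show 5*(π/20) = π/4 by ring, smul_eq_mul]
  have c2 : ∫ θ in (0:ℝ)..(π/20), f (π/5 - θ) = ∫ x in (3*π/20)..(π/5), f x := by
    rw [intervalIntegral.integral_comp_sub_left f (π/5),
      show π/5 - π/20 = 3*π/20 by ring, show π/5 - (0:ℝ) = π/5 by ring]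
  have c3 : ∫ θ in (0:ℝ)..(π/20), f (π/5 + θ) = ∫ x in (π/5)..(π/4), f x := by
    rw [intervalIntegral.integral_comp_add_left f (π/5),
      show π/5 + 0 = π/5 by ring, show π/5 + π/20 = π/4 by ring]
  have c4 : ∫ θ in (0:ℝ)..(π/20), f (2*π/5 - θ) = ∫ x in (7*π/20)..(2*π/5), f x := by
    rw [intervalIntegral.integral_comp_sub_left f (2*π/5),
      show 2*π/5 - π/20 = 7*π/20 by ring, show 2*π/5 - (0:ℝ) = 2*π/5 by ring]
  have c5 : ∫ θ in (0:ℝ)..(π/20), f (2*π/5 + θ) = ∫ x in (2*π/5)..(9*π/20), f x := by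
    rw [intervalIntegral.integral_comp_add_left f (2*π/5),
      show 2*π/5 + 0 = 2*π/5 by ring, show 2*π/5 + π/20 = 9*π/20 by ring]
  -- refl1ection
  have refl1 : ∫ x in (7*π/20)..(9*π/20), f x = - ∫ x in (π/20)..(3*π/20), f x := by
    have h := intervalIntegral.integral_comp_sub_left (a := π/20) (b := 3*π/20) f (π/2)
    rw [show π/2 - 3*π/20 = 7*π/20 by ring, show π/2 - π/20 = 9*π/20 by ring] at h
    rw [← h, ← intervalIntegral.integral_neg]
    apply intervalIntegral.integral_congr
    intro x _
    simp only [hf]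
    rw [Real.tan_pi_div_two_sub, Real.log_inv]
  -- adjacent interval additions
  have add1 : (∫ x in (3*π/20)..(π/5), f x) + ∫ x in (π/5)..(π/4), f x
      = ∫ x in (3*π/20)..(π/4), f x :=
    intervalIntegral.integral_add_adjacent_intervals
      (sub _ _ (by positivity) (by linarith) (by positivity) (by linarith))
      (sub _ _ (by positivity) (by linarith) (by positivity) (by linarith))
  have add2 : (∫ x in (7*π/20)..(2*π/5), f x) + ∫ x in (2*π/5)..(9*π/20), f x
      = ∫ x in (7*π/20)..(9*π/20), f x :=
    intervalIntegral.integral_add_adjacent_intervals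
      (sub _ _ (by positivity) (by linarith) (by positivity) (by linarith))
      (sub _ _ (by positivity) (by linarith) (by positivity) (by linarith))
  have add3 : (∫ x in (0:ℝ)..(3*π/20), f x) + ∫ x in (3*π/20)..(π/4), f x
      = ∫ x in (0:ℝ)..(π/4), f x :=
    intervalIntegral.integral_add_adjacent_intervals
      (sub _ _ le_rfl (by linarith) (by positivity) (by linarith))
      (sub _ _ (by positivity) (by linarith) (by positivity) (by linarith))
  have add4 : (∫ x in (0:ℝ)..(π/20), f x) + ∫ x in (π/20)..(3*π/20), f x
      = ∫ x in (0:ℝ)..(3*π/20), f x :=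
    intervalIntegral.integral_add_adjacent_intervals
      (sub _ _ le_rfl (by linarith) (by positivity) (by linarith))
      (sub _ _ (by positivity) (by linarith) (by positivity) (by linarith))
  rw [c1, c2, c3, c4, c5] at key
  have goal1 : ∫ θ in (0:ℝ)..(3 * π / 20), f θ = ∫ x in (0:ℝ)..(3*π/20), f x := by norm_num
  have goal2 : ∫ θ in (0:ℝ)..(π / 20), f θ = ∫ x in (0:ℝ)..(π/20), f x := by norm_num
  rw [goal1, goal2]
  have h5 : (5:ℝ)⁻¹ * 5 = 1 := by norm_num
  nlinarith [key, refl1, add1, add2, add3, add4]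
end
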